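/- arXiv:2503.05468 — 6 statements merged into one kernel-verified Lean document; each statement's English description precedes it below -/
import Mathlib

section
/- Let μ be a p×p matrix of locally finite measures on [0,∞) whose matrix of atoms at 0, μ(0) = (μ^{i,j}({0}))_{i,j}, has spectral radius strictly less than 1. Then the Markov renewal function U(t) = Σ_{n≥0} μ^{*n}([0,t]) has all entries finite for every t ≥ 0. -/
open MeasureTheory Filter Topology

noncomputable section

/-- The spectral radius of a complex `p × p` matrix: the supremum of the absolute values
of its eigenvalues. -/
def specRad (p : ℕ) (A : Matrix (Fin p) (Fin p) ℂ) : ℝ :=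
  sSup ((fun z => ‖z‖) '' spectrum ℂ A)

/-- The matrix of atoms at `0`, `μ(0) = (μ^{i,j}({0}))_{i,j}`, viewed as a complex matrix. -/
def atomMat {p : ℕ} (μ : Fin p → Fin p → Measure ℝ) : Matrix (Fin p) (Fin p) ℂ :=
  Matrix.of fun i j => ((μ i j {0}).toReal : ℂ)

/-- The Laplace transform `Lμ(z)` of a matrix of measures. -/
def lapT {p : ℕ} (μ : Fin p → Fin p → Measure ℝ) (z : ℂ) : Matrix (Fin p) (Fin p) ℂ :=
  Matrix.of fun i j => ∫ x, Complex.exp (-z * x) ∂(μ i j)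

/-- The domain `D(Lμ)` of the Laplace transform. -/
def LTdom {p : ℕ} (μ : Fin p → Fin p → Measure ℝ) : Set ℂ :=
  {z | ∀ i j, Integrable (fun x => Real.exp (-z.re * x)) (μ i j)}

/-- Matrix convolution of two matrices of measures:
`(μ*ν)^{i,j} = Σ_k μ^{i,k} * ν^{k,j}`. -/
def mconv {p : ℕ} (μ ν : Fin p → Fin p → Measure ℝ) : Fin p → Fin p → Measure ℝ :=
  fun i j => ∑ k, (μ i k).conv (ν k j)

/-- Matrix convolution powers: `μ^{*0} = I_p δ_0`, `μ^{*(n+1)} = μ * μ^{*n}`. -/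
def mconvPow {p : ℕ} (μ : Fin p → Fin p → Measure ℝ) : ℕ → Fin p → Fin p → Measure ℝ
  | 0 => fun i j => if i = j then Measure.dirac 0 else 0
  | n + 1 => mconv μ (mconvPow μ n)

/-- The Markov renewal measure `U = Σ_{n ≥ 0} μ^{*n}`. -/
def renewal {p : ℕ} (μ : Fin p → Fin p → Measure ℝ) : Fin p → Fin p → Measure ℝ :=
  fun i j => Measure.sum fun n => mconvPow μ n i j

/-- `Λ = {z ∈ D(Lμ) : det(I_p - Lμ(z)) = 0}`. -/
def LambdaSet {p : ℕ} (μ : Fin p → Fin p → Measure ℝ) : Set ℂ :=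
  {z ∈ LTdom μ | Matrix.det (1 - lapT μ z) = 0}

attribute [local instance] Matrix.linftyOpNormedRing Matrix.linftyOpNormedAlgebra

namespace RenewalAux

/-- The tilted, truncated integrand. -/
def gfun (s t : ℝ) : ℝ → ENNReal :=
  Set.indicator (Set.Icc 0 t) fun x => ENNReal.ofReal (Real.exp (-s * x))

lemma gfun_meas (s t : ℝ) : Measurable (gfun s t) :=
  (Measurable.ennreal_ofReal (by fun_prop)).indicator measurableSet_Icc

lemma gfun_le_indicator (s t : ℝ) (hs : 0 ≤ s) (x : ℝ) :
    gfun s t x ≤ Set.indicator (Set.Icc 0 t) (fun _ => (1 : ENNReal)) x := by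
  unfold gfun
  by_cases hx : x ∈ Set.Icc 0 t
  · simp only [Set.indicator_of_mem hx]
    refine ENNReal.ofReal_le_of_le_toReal ?_
    simp only [ENNReal.toReal_one]
    exact Real.exp_le_one_iff.2 (by nlinarith [hx.1])
  · simp [Set.indicator_of_notMem hx]

lemma lintegral_gfun_le (s t : ℝ) (hs : 0 ≤ s) (κ : Measure ℝ) :
    ∫⁻ x, gfun s t x ∂κ ≤ κ (Set.Icc 0 t) := by
  calc ∫⁻ x, gfun s t x ∂κ
      ≤ ∫⁻ x, Set.indicator (Set.Icc 0 t) (fun _ => (1 : ENNReal)) x ∂κ :=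
        lintegral_mono (gfun_le_indicator s t hs)
    _ = κ (Set.Icc 0 t) := lintegral_indicator_one measurableSet_Icc

lemma gfun_add_le (s t : ℝ) {x y : ℝ} (hx : 0 ≤ x) (hy : 0 ≤ y) :
    gfun s t (x + y) ≤ gfun s t x * gfun s t y := by
  unfold gfun
  by_cases h : x + y ∈ Set.Icc 0 t
  · have hxm : x ∈ Set.Icc 0 t := ⟨hx, by linarith [h.2]⟩
    have hym : y ∈ Set.Icc 0 t := ⟨hy, by linarith [h.2]⟩
    rw [Set.indicator_of_mem h, Set.indicator_of_mem hxm, Set.indicator_of_mem hym,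
      ← ENNReal.ofReal_mul (Real.exp_nonneg _), ← Real.exp_add]
    apply le_of_eq
    ring_nf
  · simp [Set.indicator_of_notMem h]

lemma ae_nonneg (κ : Measure ℝ) (hκ : κ (Set.Iio 0) = 0) : ∀ᵐ x ∂κ, 0 ≤ x := by
  rw [ae_iff]
  convert hκ using 2
  ext x
  simp [not_le]

lemma conv_Iio_eq_zero (κ ν : Measure ℝ) [SFinite κ] [SFinite ν]
    (hκ : κ (Set.Iio 0) = 0) (hν : ν (Set.Iio 0) = 0) : (κ.conv ν) (Set.Iio 0) = 0 := by
  rw [Measure.conv, Measure.map_apply (by fun_prop) measurableSet_Iio]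
  refine le_antisymm ?_ zero_le
  have hsub : ((fun q : ℝ × ℝ => q.1 + q.2) ⁻¹' Set.Iio 0) ⊆
      (Set.Iio 0 ×ˢ Set.univ) ∪ (Set.univ ×ˢ Set.Iio 0) := by
    rintro ⟨x, y⟩ h
    simp only [Set.mem_preimage, Set.mem_Iio] at h
    by_contra hc
    simp only [Set.mem_union, Set.mem_prod, Set.mem_Iio, Set.mem_univ, and_true, true_and,
      not_or, not_lt] at hc
    linarith [hc.1, hc.2]
  calc (κ.prod ν) ((fun q : ℝ × ℝ => q.1 + q.2) ⁻¹' Set.Iio 0)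
      ≤ (κ.prod ν) ((Set.Iio 0 ×ˢ Set.univ) ∪ (Set.univ ×ˢ Set.Iio 0)) := measure_mono hsub
    _ ≤ (κ.prod ν) (Set.Iio 0 ×ˢ Set.univ) + (κ.prod ν) (Set.univ ×ˢ Set.Iio 0) :=
        measure_union_le _ _
    _ = 0 := by rw [Measure.prod_prod, Measure.prod_prod, hκ, hν, zero_mul, mul_zero, add_zero]

lemma lintegral_gfun_conv (s t : ℝ) (κ ν : Measure ℝ) [SFinite κ] [SFinite ν]
    (hκ : κ (Set.Iio 0) = 0) (hν : ν (Set.Iio 0) = 0) :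
    ∫⁻ x, gfun s t x ∂(κ.conv ν) ≤ (∫⁻ x, gfun s t x ∂κ) * ∫⁻ x, gfun s t x ∂ν := by
  rw [Measure.conv, lintegral_map (gfun_meas s t) (by fun_prop),
    lintegral_prod (fun z => gfun s t (z.1 + z.2))
      (((gfun_meas s t).comp (by fun_prop : Measurable fun z : ℝ × ℝ => z.1 + z.2)).aemeasurable)]
  have hνae := ae_nonneg ν hν
  calc ∫⁻ x, ∫⁻ y, gfun s t (x + y) ∂ν ∂κ
      ≤ ∫⁻ x, gfun s t x * ∫⁻ y, gfun s t y ∂ν ∂κ := by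
        refine lintegral_mono_ae ((ae_nonneg κ hκ).mono fun x hx => ?_)
        calc ∫⁻ y, gfun s t (x + y) ∂ν
            ≤ ∫⁻ y, gfun s t x * gfun s t y ∂ν :=
              lintegral_mono_ae (hνae.mono fun y hy => gfun_add_le s t hx hy)
          _ = gfun s t x * ∫⁻ y, gfun s t y ∂ν := lintegral_const_mul _ (gfun_meas s t)
    _ = (∫⁻ x, gfun s t x ∂κ) * ∫⁻ y, gfun s t y ∂ν := lintegral_mul_const _ (gfun_meas s t)

lemma sfinite_finset_sum {ι α : Type*} [MeasurableSpace α] (s : Finset ι) (f : ι → Measure α)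
    (h : ∀ i ∈ s, SFinite (f i)) : SFinite (∑ i ∈ s, f i) := by
  classical
  induction s using Finset.induction with
  | empty => simpa using inferInstanceAs (SFinite (0 : Measure α))
  | insert a s' hx ih =>
    rw [Finset.sum_insert hx]
    haveI := h a (Finset.mem_insert_self a s')
    haveI := ih fun i hi => h i (Finset.mem_insert_of_mem hi)
    infer_instance

lemma pow_entries_nonneg {p : ℕ} (B : Matrix (Fin p) (Fin p) ℝ) (h : ∀ i j, 0 ≤ B i j) :
    ∀ n i j, 0 ≤ (B ^ n) i j := by
  intro n
  induction n with
  | zero => intro i j; rw [pow_zero]; by_cases hij : i = j <;> simp [Matrix.one_apply, hij]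
  | succ n ih =>
    intro i j
    rw [pow_succ', Matrix.mul_apply]
    exact Finset.sum_nonneg fun k _ => mul_nonneg (h i k) (ih k j)

lemma rowsum_mul_le {p : ℕ} (C D : Matrix (Fin p) (Fin p) ℝ)
    (hC : ∀ i j, 0 ≤ C i j) (d : ℝ)
    (hd : ∀ k, ∑ j, D k j ≤ d) (i : Fin p) :
    ∑ j, (C * D) i j ≤ (∑ k, C i k) * d := by
  simp_rw [Matrix.mul_apply]
  rw [Finset.sum_comm, Finset.sum_mul]
  refine Finset.sum_le_sum fun k _ => ?_
  rw [← Finset.mul_sum]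
  exact mul_le_mul_of_nonneg_left (hd k) (hC i k)

lemma tsum_pow_entry_lt_top {p : ℕ} (B : Matrix (Fin p) (Fin p) ℝ) (hB : ∀ i j, 0 ≤ B i j)
    (m : ℕ) (hm : 0 < m) (hrow : ∀ i, ∑ jj, (B ^ m) i jj ≤ 1 / 2) (i j : Fin p) :
    ∑' n, ENNReal.ofReal ((B ^ n) i j) < ⊤ := by
  haveI : NeZero m := ⟨hm.ne'⟩
  have hpow := pow_entries_nonneg B hB
  have claim1 : ∀ q r i', ∑ jj, (B ^ (r + m * q)) i' jj ≤ (∑ jj, (B ^ r) i' jj) * (1 / 2) ^ q := by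
    intro q
    induction q with
    | zero => intro r i'; simp
    | succ q ih =>
      intro r i'
      have hrw : r + m * (q + 1) = (r + m * q) + m := by ring
      rw [hrw, pow_add]
      calc ∑ jj, (B ^ (r + m * q) * B ^ m) i' jj
          ≤ (∑ k, (B ^ (r + m * q)) i' k) * (1 / 2) := by
            exact rowsum_mul_le _ _ (hpow _) _ hrow i'
        _ ≤ ((∑ jj, (B ^ r) i' jj) * (1 / 2) ^ q) * (1 / 2) := by
            apply mul_le_mul_of_nonneg_right (ih r i') (by norm_num)
        _ = (∑ jj, (B ^ r) i' jj) * (1 / 2) ^ (q + 1) := by ring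
  set K : ℝ := ∑ r ∈ Finset.range m, ∑ i', ∑ jj, (B ^ r) i' jj with hK
  have hK0 : 0 ≤ K :=
    Finset.sum_nonneg fun r _ => Finset.sum_nonneg fun i' _ =>
      Finset.sum_nonneg fun jj _ => hpow r i' jj
  have hKle : ∀ r < m, ∀ i', ∑ jj, (B ^ r) i' jj ≤ K := by
    intro r hr i'
    calc ∑ jj, (B ^ r) i' jj ≤ ∑ i'', ∑ jj, (B ^ r) i'' jj :=
          Finset.single_le_sum (f := fun i'' => ∑ jj, (B ^ r) i'' jj)
            (fun i'' _ => Finset.sum_nonneg fun jj _ => hpow r i'' jj) (Finset.mem_univ i')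
      _ ≤ K := Finset.single_le_sum (f := fun r => ∑ i'', ∑ jj, (B ^ r) i'' jj)
            (fun r _ => Finset.sum_nonneg fun i'' _ =>
              Finset.sum_nonneg fun jj _ => hpow r i'' jj) (Finset.mem_range.2 hr)
  have hentry : ∀ n, (B ^ n) i j ≤ K * (1 / 2) ^ (n / m) := by
    intro n
    have hn : n = n % m + m * (n / m) := (Nat.mod_add_div n m).symm
    calc (B ^ n) i j ≤ ∑ jj, (B ^ n) i jj :=
          Finset.single_le_sum (f := fun jj => (B ^ n) i jj)
            (fun jj _ => hpow n i jj) (Finset.mem_univ j)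
      _ ≤ (∑ jj, (B ^ (n % m)) i jj) * (1 / 2) ^ (n / m) := by
          conv_lhs => rw [hn]
          exact claim1 (n / m) (n % m) i
      _ ≤ K * (1 / 2) ^ (n / m) := by
          apply mul_le_mul_of_nonneg_right (hKle _ (Nat.mod_lt n hm) i) (by positivity)
  set c : ENNReal := ENNReal.ofReal (1 / 2) with hc
  have htsum_c : ∑' n : ℕ, c ^ (n / m) < ⊤ := by
    have heq : ∑' n : ℕ, c ^ (n / m) = ∑' q : ℕ × Fin m, c ^ ((q.1 * m + (q.2 : ℕ)) / m) := by
      rw [← (Nat.divModEquiv m).symm.tsum_eq (fun n => c ^ (n / m))]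
      rfl
    rw [heq]
    have heval : ∀ q : ℕ × Fin m, c ^ ((q.1 * m + (q.2 : ℕ)) / m) = c ^ q.1 := by
      rintro ⟨q, r⟩
      congr 1
      simp only
      rw [mul_comm q m, Nat.mul_add_div hm, Nat.div_eq_of_lt r.is_lt, add_zero]
    simp_rw [heval]
    rw [ENNReal.tsum_prod' (f := fun q : ℕ × Fin m => c ^ q.1)]
    simp_rw [tsum_fintype, Finset.sum_const, Finset.card_univ, Fintype.card_fin, nsmul_eq_mul]
    rw [ENNReal.tsum_mul_left, ENNReal.tsum_geometric]
    refine ENNReal.mul_lt_top (by simp) ?_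
    rw [ENNReal.inv_lt_top]
    rw [hc]
    rw [tsub_pos_iff_lt]
    exact ENNReal.ofReal_lt_one.2 (by norm_num)
  calc ∑' n, ENNReal.ofReal ((B ^ n) i j)
      ≤ ∑' n : ℕ, ENNReal.ofReal K * c ^ (n / m) := by
        refine ENNReal.tsum_le_tsum fun n => ?_
        calc ENNReal.ofReal ((B ^ n) i j) ≤ ENNReal.ofReal (K * (1 / 2) ^ (n / m)) :=
              ENNReal.ofReal_le_ofReal (hentry n)
          _ = ENNReal.ofReal K * c ^ (n / m) := by
              rw [ENNReal.ofReal_mul hK0, hc, ← ENNReal.ofReal_pow (by norm_num)]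
    _ = ENNReal.ofReal K * ∑' n : ℕ, c ^ (n / m) := ENNReal.tsum_mul_left
    _ < ⊤ := ENNReal.mul_lt_top ENNReal.ofReal_lt_top htsum_c

lemma exists_pow_norm_lt {p : ℕ} [NeZero p] (A : Matrix (Fin p) (Fin p) ℂ)
    (h : specRad p A < 1) : ∃ m, 0 < m ∧ ‖A ^ m‖ < 1 / 2 := by
  have hbd : BddAbove ((fun z => ‖z‖) '' spectrum ℂ A) := by
    refine ⟨‖A‖, ?_⟩
    rintro _ ⟨lam, hlam, rfl⟩
    exact spectrum.norm_le_norm_of_mem hlam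
  have hsr : spectralRadius ℂ A < 1 := by
    have hle : spectralRadius ℂ A ≤ ENNReal.ofReal (specRad p A) := by
      rw [spectralRadius]
      refine iSup₂_le fun lam hlam => ?_
      rw [← enorm_eq_nnnorm, ← ofReal_norm]
      refine ENNReal.ofReal_le_ofReal ?_
      exact le_csSup hbd ⟨lam, hlam, rfl⟩
    exact lt_of_le_of_lt hle (ENNReal.ofReal_lt_one.2 h)
  obtain ⟨c, hc1, hc2⟩ := exists_between hsr
  have hgel := spectrum.pow_nnnorm_pow_one_div_tendsto_nhds_spectralRadius A
  have hev1 : ∀ᶠ n : ℕ in atTop, ((‖A ^ n‖₊ : ENNReal) ^ (1 / (n : ℝ))) < c :=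
    hgel.eventually_lt_const hc1
  have hev2 : ∀ᶠ n : ℕ in atTop, c ^ n < ENNReal.ofReal (1 / 2) := by
    have : Tendsto (fun n : ℕ => c ^ n) atTop (𝓝 0) :=
      ENNReal.tendsto_pow_atTop_nhds_zero_of_lt_one hc2
    exact this.eventually_lt_const (by simp)
  obtain ⟨m, ⟨⟨hm1, hm2⟩, hm3'⟩⟩ := ((hev1.and hev2).and (eventually_ge_atTop 1)).exists
  have hm3 : 0 < m := hm3'
  refine ⟨m, hm3, ?_⟩
  have hmne : (m : ℝ) ≠ 0 := Nat.cast_ne_zero.2 (by omega)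
  have hx : (‖A ^ m‖₊ : ENNReal) < ENNReal.ofReal (1 / 2) := by
    have heq : (‖A ^ m‖₊ : ENNReal) = (((‖A ^ m‖₊ : ENNReal) ^ (1 / (m : ℝ))) ^ (m : ℕ)) := by
      rw [← ENNReal.rpow_natCast (((‖A ^ m‖₊ : ENNReal)) ^ (1 / (m : ℝ))) m,
        ← ENNReal.rpow_mul, one_div, inv_mul_cancel₀ hmne, ENNReal.rpow_one]
    calc (‖A ^ m‖₊ : ENNReal) = (((‖A ^ m‖₊ : ENNReal) ^ (1 / (m : ℝ))) ^ (m : ℕ)) := heq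
      _ ≤ c ^ m := pow_le_pow_left' hm1.le m
      _ < ENNReal.ofReal (1 / 2) := hm2
  have := (ENNReal.lt_ofReal_iff_toReal_lt (by simp)).1 hx
  simpa [ENNReal.coe_toReal] using this

variable {p : ℕ} (μ : Fin p → Fin p → Measure ℝ)

lemma mconvPow_sfinite (hS : ∀ i j, SFinite (μ i j)) :
    ∀ n i j, SFinite (mconvPow μ n i j) := by
  intro n
  induction n with
  | zero =>
    intro i j
    show SFinite (if i = j then Measure.dirac 0 else 0)
    by_cases hij : i = j <;> simp only [hij, if_true, if_false] <;> infer_instance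
  | succ n ih =>
    intro i j
    show SFinite (∑ k, (μ i k).conv (mconvPow μ n k j))
    refine sfinite_finset_sum _ _ fun k _ => ?_
    haveI := hS i k
    haveI := ih k j
    infer_instance

lemma mconvPow_Iio (hS : ∀ i j, SFinite (μ i j)) (hsupp : ∀ i j, μ i j (Set.Iio 0) = 0) :
    ∀ n i j, mconvPow μ n i j (Set.Iio 0) = 0 := by
  intro n
  induction n with
  | zero =>
    intro i j
    show (if i = j then Measure.dirac 0 else 0) (Set.Iio 0) = 0
    by_cases hij : i = j <;> simp [hij]
  | succ n ih =>
    intro i j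
    show (∑ k, (μ i k).conv (mconvPow μ n k j)) (Set.Iio 0) = 0
    rw [Measure.finset_sum_apply]
    refine Finset.sum_eq_zero fun k _ => ?_
    haveI := hS i k
    haveI := mconvPow_sfinite μ hS n k j
    exact conv_Iio_eq_zero _ _ (hsupp i k) (ih k j)

lemma lintegral_gfun_mconvPow (hS : ∀ i j, SFinite (μ i j))
    (hsupp : ∀ i j, μ i j (Set.Iio 0) = 0) (s t : ℝ) (ht : 0 ≤ t)
    (B : Matrix (Fin p) (Fin p) ℝ) (hBpos : ∀ i j, 0 ≤ B i j)
    (hB : ∀ i j, ∫⁻ x, gfun s t x ∂(μ i j) = ENNReal.ofReal (B i j)) :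
    ∀ n i j, ∫⁻ x, gfun s t x ∂(mconvPow μ n i j) ≤ ENNReal.ofReal ((B ^ n) i j) := by
  intro n
  induction n with
  | zero =>
    intro i j
    show ∫⁻ x, gfun s t x ∂(if i = j then Measure.dirac 0 else 0) ≤ _
    by_cases hij : i = j
    · subst hij
      simp only [if_true]
      rw [lintegral_dirac' _ (gfun_meas s t)]
      have : gfun s t 0 = 1 := by
        unfold gfun
        rw [Set.indicator_of_mem (Set.mem_Icc.2 ⟨le_refl 0, ht⟩)]
        simp
      rw [this, pow_zero, Matrix.one_apply_eq]
      simp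
    · simp [hij]
  | succ n ih =>
    intro i j
    show ∫⁻ x, gfun s t x ∂(∑ k, (μ i k).conv (mconvPow μ n k j)) ≤ _
    rw [lintegral_finset_sum_measure]
    calc ∑ k, ∫⁻ x, gfun s t x ∂((μ i k).conv (mconvPow μ n k j))
        ≤ ∑ k, ENNReal.ofReal (B i k) * ENNReal.ofReal ((B ^ n) k j) := by
          refine Finset.sum_le_sum fun k _ => ?_
          haveI := hS i k
          haveI := mconvPow_sfinite μ hS n k j
          calc ∫⁻ x, gfun s t x ∂((μ i k).conv (mconvPow μ n k j))
              ≤ (∫⁻ x, gfun s t x ∂(μ i k)) * ∫⁻ x, gfun s t x ∂(mconvPow μ n k j) :=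
                lintegral_gfun_conv s t _ _ (hsupp i k) (mconvPow_Iio μ hS hsupp n k j)
            _ ≤ ENNReal.ofReal (B i k) * ENNReal.ofReal ((B ^ n) k j) := by
                rw [hB i k]
                exact mul_le_mul_right (ih k j) _
      _ = ENNReal.ofReal ((B ^ (n + 1)) i j) := by
          rw [pow_succ', Matrix.mul_apply]
          have hcg : ∀ k ∈ Finset.univ, ENNReal.ofReal (B i k) * ENNReal.ofReal ((B ^ n) k j)
              = ENNReal.ofReal (B i k * (B ^ n) k j) :=
            fun k _ => (ENNReal.ofReal_mul (hBpos i k)).symm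
          rw [Finset.sum_congr rfl hcg, ← ENNReal.ofReal_sum_of_nonneg
            (fun k _ => mul_nonneg (hBpos i k) (pow_entries_nonneg B hBpos n k j))]

lemma measure_Icc_le (s t : ℝ) (hs : 0 ≤ s) (κ : Measure ℝ) :
    κ (Set.Icc 0 t) ≤ ENNReal.ofReal (Real.exp (s * t)) * ∫⁻ x, gfun s t x ∂κ := by
  have h1 : ∫⁻ x, gfun s t x ∂κ = ∫⁻ x in Set.Icc 0 t, ENNReal.ofReal (Real.exp (-s * x)) ∂κ := by
    unfold gfun
    rw [lintegral_indicator measurableSet_Icc]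
  rw [h1, ← setLIntegral_one, ← lintegral_const_mul' _ _ ENNReal.ofReal_ne_top]
  refine setLIntegral_mono (by fun_prop) fun x hx => ?_
  rw [← ENNReal.ofReal_mul (Real.exp_nonneg _), ← Real.exp_add]
  refine ENNReal.one_le_ofReal.2 ?_
  nlinarith [Real.add_one_le_exp (s * t + -s * x), hx.1, hx.2]

lemma tendsto_lintegral_gfun (t : ℝ) (ht : 0 ≤ t) (κ : Measure ℝ) [IsLocallyFiniteMeasure κ]
    (hκ : κ (Set.Iio 0) = 0) :
    Tendsto (fun n : ℕ => ∫⁻ x, gfun n t x ∂κ) atTop (𝓝 (κ {0})) := by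
  have hfin : κ (Set.Icc 0 t) ≠ ⊤ := (isCompact_Icc.measure_lt_top).ne
  have hmain : Tendsto (fun n : ℕ => ∫⁻ x, gfun n t x ∂κ) atTop
      (𝓝 (∫⁻ x, Set.indicator ({0} : Set ℝ) (fun _ => (1 : ENNReal)) x ∂κ)) := by
    refine tendsto_lintegral_of_dominated_convergence
      (Set.indicator (Set.Icc 0 t) (fun _ => (1 : ENNReal)))
      (fun n => gfun_meas _ t)
      (fun n => Eventually.of_forall (gfun_le_indicator _ t (Nat.cast_nonneg n))) ?_ ?_
    · have hrw : ∫⁻ a, (Set.Icc (0:ℝ) t).indicator (fun _ => (1 : ENNReal)) a ∂κ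
          = κ (Set.Icc 0 t) := lintegral_indicator_one measurableSet_Icc
      rw [hrw]; exact hfin
    · refine (ae_nonneg κ hκ).mono fun x hx => ?_
      rcases eq_or_lt_of_le hx with heq | hpos
      · have hx0 : x = 0 := heq.symm
        subst hx0
        have hval : ∀ n : ℕ, gfun n t 0 = 1 := by
          intro n
          unfold gfun
          rw [Set.indicator_of_mem (Set.mem_Icc.2 ⟨le_refl 0, ht⟩)]
          simp
        have hval2 : Set.indicator ({0} : Set ℝ) (fun _ => (1 : ENNReal)) 0 = 1 := by simp
        simp only [hval, hval2]
        exact tendsto_const_nhds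
      · have h0 : Set.indicator ({0} : Set ℝ) (fun _ => (1 : ENNReal)) x = 0 := by
          simp [hpos.ne']
        rw [h0]
        have hub : ∀ n : ℕ, gfun n t x ≤ ENNReal.ofReal (Real.exp (-(n : ℝ) * x)) := by
          intro n
          unfold gfun
          exact Set.indicator_le_self _ _ x
        have hlim : Tendsto (fun n : ℕ => ENNReal.ofReal (Real.exp (-(n : ℝ) * x))) atTop
            (𝓝 0) := by
          have hrw : ∀ n : ℕ, ENNReal.ofReal (Real.exp (-(n : ℝ) * x))
              = (ENNReal.ofReal (Real.exp (-x))) ^ n := by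
            intro n
            rw [← ENNReal.ofReal_pow (Real.exp_nonneg _), ← Real.exp_nat_mul]
            ring_nf
          simp only [hrw]
          refine ENNReal.tendsto_pow_atTop_nhds_zero_of_lt_one ?_
          exact ENNReal.ofReal_lt_one.2 (Real.exp_lt_one_iff.2 (by linarith))
        exact tendsto_of_tendsto_of_tendsto_of_le_of_le tendsto_const_nhds hlim
          (fun n => zero_le) hub
  have h01 : ∫⁻ x, ({0} : Set ℝ).indicator (fun _ => (1 : ENNReal)) x ∂κ = κ {0} :=
    lintegral_indicator_one (measurableSet_singleton 0)
  rwa [h01] at hmain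

end RenewalAux

open RenewalAux in
/-- If the matrix of atoms at `0` of a `p×p` matrix of locally finite
measures on `[0,∞)` has spectral radius `< 1`, then the Markov renewal function
`U(t) = Σ_{n≥0} μ^{*n}([0,t])` has all entries finite for every `t ≥ 0`. -/
theorem renewal_function_finite {p : ℕ} (μ : Fin p → Fin p → Measure ℝ)
    (hloc : ∀ i j, IsLocallyFiniteMeasure (μ i j))
    (hsupp : ∀ i j, μ i j (Set.Iio 0) = 0)
    (hA2 : specRad p (atomMat μ) < 1) :
    ∀ t : ℝ, 0 ≤ t → ∀ i j, renewal μ i j (Set.Icc 0 t) < ⊤ := by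
  intro t ht i j
  haveI : NeZero p := ⟨fun h => (h ▸ i).elim0⟩
  have hS : ∀ a b, SFinite (μ a b) := fun a b => by
    haveI := hloc a b; infer_instance
  have hfin : ∀ a b, μ a b (Set.Icc 0 t) ≠ ⊤ := fun a b => by
    haveI := hloc a b; exact (isCompact_Icc.measure_lt_top).ne
  set A0 : Matrix (Fin p) (Fin p) ℝ := Matrix.of fun a b => (μ a b {0}).toReal with hA0
  have hmap : atomMat μ = A0.map Complex.ofReal := rfl
  obtain ⟨m, hm0, hmnorm⟩ := exists_pow_norm_lt (atomMat μ) hA2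
  have hA0pow : (atomMat μ) ^ m = (A0 ^ m).map Complex.ofReal := by
    rw [hmap]
    have := map_pow (Complex.ofRealHom.mapMatrix) A0 m
    simp only [RingHom.mapMatrix_apply] at this
    exact this.symm
  -- row sums of `A0 ^ m` are `< 1/2`
  have hrowA0 : ∀ a, ∑ b, (A0 ^ m) a b < 1 / 2 := by
    intro a
    have h1 : ∑ b, (A0 ^ m) a b ≤ ∑ b, ‖((atomMat μ) ^ m) a b‖ := by
      rw [hA0pow]
      refine Finset.sum_le_sum fun b _ => ?_
      rw [Matrix.map_apply, Complex.norm_real, Real.norm_eq_abs]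
      exact le_abs_self _
    have h2 : ∑ b, ‖((atomMat μ) ^ m) a b‖ ≤ ‖(atomMat μ) ^ m‖ := by
      have hn : (∑ b, ‖((atomMat μ) ^ m) a b‖₊) ≤ ‖(atomMat μ) ^ m‖₊ := by
        rw [Matrix.linfty_opNNNorm_def]
        exact Finset.le_sup (f := fun a => ∑ b, ‖((atomMat μ) ^ m) a b‖₊) (Finset.mem_univ a)
      have := NNReal.coe_le_coe.2 hn
      simpa [NNReal.coe_sum] using this
    linarith
  -- the truncated Laplace transforms converge to `A0` entrywise
  have htend : ∀ a b, Tendsto (fun n : ℕ => (∫⁻ x, gfun n t x ∂(μ a b)).toReal) atTop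
      (𝓝 (A0 a b)) := by
    intro a b
    haveI := hloc a b
    have h := tendsto_lintegral_gfun t ht (μ a b) (hsupp a b)
    have hne : μ a b {0} ≠ ⊤ :=
      ne_top_of_le_ne_top (hfin a b)
        (measure_mono (Set.singleton_subset_iff.2 (Set.mem_Icc.2 ⟨le_refl 0, ht⟩)))
    exact (ENNReal.tendsto_toReal hne).comp h
  set Bn : ℕ → Matrix (Fin p) (Fin p) ℝ :=
    fun n => Matrix.of fun a b => (∫⁻ x, gfun n t x ∂(μ a b)).toReal with hBn
  have hmatt : Tendsto Bn atTop (𝓝 A0) := by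
    refine tendsto_pi_nhds.2 ?_
    intro a
    rw [tendsto_pi_nhds]
    intro b
    exact htend a b
  have hpowt : Tendsto (fun n => Bn n ^ m) atTop (𝓝 (A0 ^ m)) :=
    ((continuous_pow m).tendsto _).comp hmatt
  have hrowt : ∀ a, Tendsto (fun n => ∑ b, (Bn n ^ m) a b) atTop
      (𝓝 (∑ b, (A0 ^ m) a b)) := by
    intro a
    refine tendsto_finset_sum _ fun b _ => ?_
    exact (((continuous_apply b).comp (continuous_apply a)).tendsto _).comp hpowt
  have hev : ∀ᶠ n : ℕ in atTop, ∀ a, ∑ b, (Bn n ^ m) a b ≤ 1 / 2 :=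
    eventually_all.2 fun a => (hrowt a).eventually_le_const (hrowA0 a)
  obtain ⟨s₀, hs₀⟩ := hev.exists
  set B : Matrix (Fin p) (Fin p) ℝ := Bn s₀ with hB
  have hBpos : ∀ a b, 0 ≤ B a b := fun a b => ENNReal.toReal_nonneg
  have hBint : ∀ a b, ∫⁻ x, gfun s₀ t x ∂(μ a b) = ENNReal.ofReal (B a b) := by
    intro a b
    have hBab : B a b = (∫⁻ x, gfun s₀ t x ∂(μ a b)).toReal := rfl
    rw [hBab, ENNReal.ofReal_toReal]
    exact ne_top_of_le_ne_top (hfin a b) (lintegral_gfun_le _ t (Nat.cast_nonneg _) (μ a b))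
  have hkey := tsum_pow_entry_lt_top B hBpos m hm0 hs₀ i j
  show (Measure.sum fun n => mconvPow μ n i j) (Set.Icc 0 t) < ⊤
  rw [Measure.sum_apply _ measurableSet_Icc]
  calc ∑' n, mconvPow μ n i j (Set.Icc 0 t)
      ≤ ∑' n, ENNReal.ofReal (Real.exp (s₀ * t)) * ENNReal.ofReal ((B ^ n) i j) := by
        refine ENNReal.tsum_le_tsum fun n => ?_
        calc mconvPow μ n i j (Set.Icc 0 t)
            ≤ ENNReal.ofReal (Real.exp (s₀ * t)) * ∫⁻ x, gfun s₀ t x ∂(mconvPow μ n i j) :=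
              measure_Icc_le _ t (Nat.cast_nonneg _) _
          _ ≤ _ := mul_le_mul_right
              (lintegral_gfun_mconvPow μ hS hsupp _ t ht B hBpos hBint n i j) _
    _ = ENNReal.ofReal (Real.exp (s₀ * t)) * ∑' n, ENNReal.ofReal ((B ^ n) i j) :=
        ENNReal.tsum_mul_left
    _ < ⊤ := ENNReal.mul_lt_top ENNReal.ofReal_lt_top hkey
end
end

section
/- Let μ be a p×p matrix of locally finite measures on [0,∞) satisfying (A1) and (A2). Then there exists at most one real number α with ρ(Lμ(α)) = 1, where ρ denotes the spectral radius. -/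
open MeasureTheory Filter Topology
open scoped ENNReal NNReal

noncomputable section

set_option linter.unusedSectionVars false

namespace MalthusAux

attribute [local instance] Matrix.linftyOpNormedRing Matrix.linftyOpNormedAlgebra

variable {p : ℕ}

lemma specRad_of_isEmpty (hp : p = 0) (A : Matrix (Fin p) (Fin p) ℂ) : specRad p A = 0 := by
  subst hp
  have : spectrum ℂ A = ∅ := by
    ext z
    simp [spectrum.mem_iff, isUnit_of_subsingleton]
  rw [specRad, this]
  simp [Real.sSup_empty]

variable [Nonempty (Fin p)]

lemma specRad_eq_toReal (A : Matrix (Fin p) (Fin p) ℂ) :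
    specRad p A = (spectralRadius ℂ A).toReal := by
  have hbdd : BddAbove ((fun z => ‖z‖) '' spectrum ℂ A) :=
    ⟨‖A‖, by rintro _ ⟨z, hz, rfl⟩; exact spectrum.norm_le_norm_of_mem hz⟩
  have hfin : spectralRadius ℂ A ≠ ⊤ :=
    ((spectrum.spectralRadius_le_nnnorm A).trans_lt ENNReal.coe_lt_top).ne
  have hnn : 0 ≤ sSup ((fun z => ‖z‖) '' spectrum ℂ A) :=
    Real.sSup_nonneg (by rintro _ ⟨z, hz, rfl⟩; positivity)
  apply le_antisymm
  · apply Real.sSup_le _ ENNReal.toReal_nonneg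
    rintro _ ⟨z, hz, rfl⟩
    have h1 : (‖z‖₊ : ℝ≥0∞) ≤ spectralRadius ℂ A := le_iSup₂ (f := fun k _ => (‖k‖₊ : ℝ≥0∞)) z hz
    have := ENNReal.toReal_mono hfin h1
    simpa using this
  · have h1 : spectralRadius ℂ A ≤
        ENNReal.ofReal (sSup ((fun z => ‖z‖) '' spectrum ℂ A)) := by
      apply iSup₂_le
      intro z hz
      have hle : ‖z‖ ≤ _ := le_csSup hbdd ⟨z, hz, rfl⟩
      calc (‖z‖₊ : ℝ≥0∞) = ENNReal.ofReal (‖z‖) := by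
            rw [ofReal_norm]; rfl
        _ ≤ _ := ENNReal.ofReal_le_ofReal hle
    have := ENNReal.toReal_mono ENNReal.ofReal_ne_top h1
    rwa [ENNReal.toReal_ofReal hnn] at this

lemma tendsto_gelfand (A : Matrix (Fin p) (Fin p) ℂ) :
    Tendsto (fun n : ℕ => ‖A ^ n‖ ^ (1 / (n : ℝ))) atTop (𝓝 (specRad p A)) := by
  have hfin : spectralRadius ℂ A ≠ ⊤ :=
    ((spectrum.spectralRadius_le_nnnorm A).trans_lt ENNReal.coe_lt_top).ne
  have h := (ENNReal.tendsto_toReal hfin).comp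
    (spectrum.pow_nnnorm_pow_one_div_tendsto_nhds_spectralRadius A)
  rw [specRad_eq_toReal]
  convert h using 2 with n
  rw [Function.comp_apply, ← ENNReal.toReal_rpow]
  simp

lemma specRad_le_pow (A : Matrix (Fin p) (Fin p) ℂ) (n : ℕ) :
    specRad p A ≤ ‖A ^ (n + 1)‖ ^ (1 / (n + 1 : ℝ)) := by
  have h := spectrum.spectralRadius_le_pow_nnnorm_pow_one_div ℂ A n
  rw [specRad_eq_toReal]
  have hne : ((‖A ^ (n+1)‖₊ : ℝ≥0∞) ^ (1/(n+1:ℝ)) * (‖(1 : Matrix (Fin p) (Fin p) ℂ)‖₊ : ℝ≥0∞) ^ (1/(n+1:ℝ)) : ℝ≥0∞) ≠ ⊤ :=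
    ENNReal.mul_ne_top (ENNReal.rpow_ne_top_of_nonneg (by positivity) ENNReal.coe_ne_top)
      (ENNReal.rpow_ne_top_of_nonneg (by positivity) ENNReal.coe_ne_top)
  have h2 := ENNReal.toReal_mono hne h
  rw [ENNReal.toReal_mul, ← ENNReal.toReal_rpow, ← ENNReal.toReal_rpow] at h2
  simpa [norm_one] using h2


/-- row-sup of row sums. -/
def nuv (A : Matrix (Fin p) (Fin p) ℝ≥0) : ℝ≥0 :=
  Finset.univ.sup fun i => ∑ j, A i j

def cc : ℝ≥0 →+* ℂ := Complex.ofRealHom.comp NNReal.toRealHom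

lemma nnnorm_map_pow (S : Matrix (Fin p) (Fin p) ℝ≥0) (n : ℕ) :
    ‖(S.map ⇑cc) ^ n‖₊ = nuv (S ^ n) := by
  have h : S.map ⇑cc = cc.mapMatrix S := rfl
  rw [h, ← map_pow, Matrix.linfty_opNNNorm_def]
  unfold nuv
  congr 1
  funext i
  refine Finset.sum_congr rfl fun j _ => ?_
  simp [RingHom.mapMatrix_apply, Matrix.map_apply, cc]

lemma entry_pow_mono {A B : Matrix (Fin p) (Fin p) ℝ≥0} (h : ∀ i j, A i j ≤ B i j) (n : ℕ) :
    ∀ i j, (A ^ n) i j ≤ (B ^ n) i j := by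
  induction n with
  | zero => intro i j; simp
  | succ n ih =>
    intro i j
    rw [pow_succ, pow_succ, Matrix.mul_apply, Matrix.mul_apply]
    exact Finset.sum_le_sum fun k _ => mul_le_mul' (ih i k) (h k j)

lemma nuv_mono {A B : Matrix (Fin p) (Fin p) ℝ≥0} (h : ∀ i j, A i j ≤ B i j) :
    nuv A ≤ nuv B :=
  Finset.sup_mono_fun fun i _ => Finset.sum_le_sum fun j _ => h i j

section GM

variable {l : ℝ} (hl0 : 0 < l) (hl1 : l < 1)

lemma conj_exp {l : ℝ} (hl0 : 0 < l) (hl1 : l < 1) :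
    (1/l).HolderConjugate (1/(1-l)) where
  inv_add_inv_eq_inv := by
    rw [one_div, one_div, inv_inv, inv_inv, inv_one]; ring
  left_pos := one_div_pos.mpr hl0
  right_pos := one_div_pos.mpr (by linarith)

include hl0 hl1

lemma gm_sum {ι : Type*} (s : Finset ι) (a b c : ι → ℝ≥0)
    (h : ∀ k ∈ s, c k ≤ a k ^ l * b k ^ (1 - l)) :
    ∑ k ∈ s, c k ≤ (∑ k ∈ s, a k) ^ l * (∑ k ∈ s, b k) ^ (1 - l) := by
  have h1l : 0 < 1 - l := by linarith
  calc ∑ k ∈ s, c k ≤ ∑ k ∈ s, a k ^ l * b k ^ (1-l) := Finset.sum_le_sum h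
    _ ≤ (∑ k ∈ s, (a k ^ l) ^ (1/l)) ^ (1/(1/l)) *
        (∑ k ∈ s, (b k ^ (1-l)) ^ (1/(1-l))) ^ (1/(1/(1-l))) :=
      NNReal.inner_le_Lp_mul_Lq s _ _ (conj_exp hl0 hl1)
    _ = _ := by
      rw [one_div_one_div, one_div_one_div]
      congr 1
      · congr 1
        refine Finset.sum_congr rfl fun k _ => ?_
        rw [← NNReal.rpow_mul, mul_one_div_cancel hl0.ne', NNReal.rpow_one]
      · congr 1
        refine Finset.sum_congr rfl fun k _ => ?_
        rw [← NNReal.rpow_mul, mul_one_div_cancel h1l.ne', NNReal.rpow_one]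

lemma gm_mul {a b c a' b' c' : ℝ≥0} (h : c ≤ a ^ l * b ^ (1-l)) (h' : c' ≤ a' ^ l * b' ^ (1-l)) :
    c * c' ≤ (a * a') ^ l * (b * b') ^ (1-l) := by
  calc c * c' ≤ (a ^ l * b ^ (1-l)) * (a' ^ l * b' ^ (1-l)) := mul_le_mul' h h'
    _ = (a * a') ^ l * (b * b') ^ (1-l) := by
      rw [NNReal.mul_rpow, NNReal.mul_rpow]; ring

lemma gm_matmul {A B C A' B' C' : Matrix (Fin p) (Fin p) ℝ≥0}
    (h : ∀ i j, C i j ≤ A i j ^ l * B i j ^ (1-l))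
    (h' : ∀ i j, C' i j ≤ A' i j ^ l * B' i j ^ (1-l)) :
    ∀ i j, (C * C') i j ≤ (A * A') i j ^ l * (B * B') i j ^ (1-l) := by
  intro i j
  rw [Matrix.mul_apply, Matrix.mul_apply, Matrix.mul_apply]
  exact gm_sum hl0 hl1 _ _ _ _ fun k _ => gm_mul hl0 hl1 (h i k) (h' k j)

lemma gm_pow {A B C : Matrix (Fin p) (Fin p) ℝ≥0}
    (h : ∀ i j, C i j ≤ A i j ^ l * B i j ^ (1-l)) (n : ℕ) :
    ∀ i j, (C ^ n) i j ≤ (A ^ n) i j ^ l * (B ^ n) i j ^ (1-l) := by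
  induction n with
  | zero =>
    intro i j
    rcases eq_or_ne i j with rfl | hij
    · simp
    · simp [Matrix.one_apply_ne hij, NNReal.zero_rpow hl0.ne',
        NNReal.zero_rpow (by linarith : (1:ℝ)-l ≠ 0)]
  | succ n ih =>
    have := gm_matmul hl0 hl1 ih h
    simpa [pow_succ] using this

lemma gm_nuv {A B C : Matrix (Fin p) (Fin p) ℝ≥0}
    (h : ∀ i j, C i j ≤ A i j ^ l * B i j ^ (1-l)) :
    nuv C ≤ nuv A ^ l * nuv B ^ (1-l) := by
  apply Finset.sup_le
  intro i _
  calc ∑ j, C i j ≤ (∑ j, A i j) ^ l * (∑ j, B i j) ^ (1-l) := gm_sum hl0 hl1 _ _ _ _ fun j _ => h i j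
    _ ≤ nuv A ^ l * nuv B ^ (1-l) := by
      unfold nuv
      exact mul_le_mul'
        (NNReal.rpow_le_rpow (Finset.le_sup (f := fun i => ∑ j : Fin p, A i j) (Finset.mem_univ i)) hl0.le)
        (NNReal.rpow_le_rpow (Finset.le_sup (f := fun i => ∑ j : Fin p, B i j) (Finset.mem_univ i)) (by linarith))

end GM

section Measures

variable (μ : Fin p → Fin p → Measure ℝ)

/-- The real nonnegative matrix of Laplace transforms. -/
def Rmat (t : ℝ) : Matrix (Fin p) (Fin p) ℝ≥0 :=
  Matrix.of fun i j => (∫ x, Real.exp (-t * x) ∂(μ i j)).toNNReal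

/-- The real nonnegative matrix of atoms at 0. -/
def Rinf : Matrix (Fin p) (Fin p) ℝ≥0 :=
  Matrix.of fun i j => ((μ i j) {0}).toReal.toNNReal

variable {μ}

lemma ae_nonneg (hsupp : ∀ i j, μ i j (Set.Iio 0) = 0) (i j : Fin p) :
    ∀ᵐ x ∂(μ i j), 0 ≤ x := by
  rw [ae_iff]
  convert hsupp i j using 2
  ext x
  simp [not_le]

lemma integrable_of_mem {t : ℝ} (ht : (t : ℂ) ∈ LTdom μ) (i j : Fin p) :
    Integrable (fun x => Real.exp (-t * x)) (μ i j) := by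
  have := ht i j
  rwa [Complex.ofReal_re] at this

lemma dom_mono (hsupp : ∀ i j, μ i j (Set.Iio 0) = 0) {a t : ℝ} (ha : (a : ℂ) ∈ LTdom μ)
    (hat : a ≤ t) : (t : ℂ) ∈ LTdom μ := by
  intro i j
  rw [Complex.ofReal_re]
  refine (integrable_of_mem ha i j).mono'
    ((Real.continuous_exp.comp (continuous_const.mul continuous_id)).aestronglyMeasurable) ?_
  filter_upwards [ae_nonneg hsupp i j] with x hx
  rw [Real.norm_eq_abs, Real.abs_exp]
  exact Real.exp_le_exp.mpr (by nlinarith)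

lemma lapT_apply_ofReal (t : ℝ) (i j : Fin p) :
    lapT μ t i j = ((∫ x, Real.exp (-t * x) ∂(μ i j) : ℝ) : ℂ) := by
  calc lapT μ t i j = ∫ x, ((Real.exp (-t * x) : ℝ) : ℂ) ∂(μ i j) := by
        rw [lapT, Matrix.of_apply]
        congr 1
        funext x
        rw [Complex.ofReal_exp]
        norm_cast
    _ = _ := integral_ofReal

lemma lapT_eq_map {t : ℝ} (ht : (t : ℂ) ∈ LTdom μ) :
    lapT μ t = (Rmat μ t).map ⇑cc := by
  ext i j
  rw [lapT_apply_ofReal, Matrix.map_apply]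
  simp only [Rmat, Matrix.of_apply, cc, RingHom.coe_comp, Function.comp_apply,
    Complex.ofRealHom_eq_coe, NNReal.coe_toRealHom]
  rw [Real.coe_toNNReal _ (integral_nonneg fun x => (Real.exp_pos _).le)]

lemma atomMat_eq_map : atomMat μ = (Rinf μ).map ⇑cc := by
  ext i j
  simp only [atomMat, Matrix.of_apply, Matrix.map_apply, Rinf, cc, RingHom.coe_comp,
    Function.comp_apply, Complex.ofRealHom_eq_coe, NNReal.coe_toRealHom]
  rw [Real.coe_toNNReal _ ENNReal.toReal_nonneg]

lemma Rmat_anti (hsupp : ∀ i j, μ i j (Set.Iio 0) = 0) {a t : ℝ} (ha : (a : ℂ) ∈ LTdom μ)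
    (hat : a ≤ t) (i j : Fin p) : Rmat μ t i j ≤ Rmat μ a i j := by
  apply Real.toNNReal_mono
  apply integral_mono_ae (integrable_of_mem (dom_mono hsupp ha hat) i j)
    (integrable_of_mem ha i j)
  filter_upwards [ae_nonneg hsupp i j] with x hx
  exact Real.exp_le_exp.mpr (by nlinarith)

lemma Rmat_holder (hsupp : ∀ i j, μ i j (Set.Iio 0) = 0) {a b l : ℝ}
    (ha : (a : ℂ) ∈ LTdom μ) (hb : (b : ℂ) ∈ LTdom μ) (hl0 : 0 < l) (hl1 : l < 1)
    (i j : Fin p) :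
    Rmat μ (l * a + (1 - l) * b) i j ≤ Rmat μ a i j ^ l * Rmat μ b i j ^ (1 - l) := by
  set t := l * a + (1 - l) * b with htdef
  have h1l : (0:ℝ) < 1 - l := by linarith
  have htdom : (t : ℂ) ∈ LTdom μ := by
    rcases le_total a b with hab | hab
    · exact dom_mono hsupp ha (by nlinarith)
    · exact dom_mono hsupp hb (by nlinarith)
  -- lintegral versions
  have hcoe : ∀ {c : ℝ}, (c : ℂ) ∈ LTdom μ → ((Rmat μ c i j : ℝ≥0) : ℝ≥0∞)
      = ∫⁻ x, ENNReal.ofReal (Real.exp (-c * x)) ∂(μ i j) := by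
    intro c hc
    rw [← ofReal_integral_eq_lintegral_ofReal (integrable_of_mem hc i j)
      (Filter.Eventually.of_forall fun x => (Real.exp_pos _).le)]
    simp only [Rmat, Matrix.of_apply, ENNReal.ofReal]
  -- Hölder
  have hhold : (∫⁻ x, ENNReal.ofReal (Real.exp (-t * x)) ∂(μ i j))
      ≤ (∫⁻ x, ENNReal.ofReal (Real.exp (-a * x)) ∂(μ i j)) ^ l *
        (∫⁻ x, ENNReal.ofReal (Real.exp (-b * x)) ∂(μ i j)) ^ (1 - l) := by
    have hf : AEMeasurable (fun x => ENNReal.ofReal (Real.exp (l * (-a * x)))) (μ i j) :=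
      ((Real.continuous_exp.comp (continuous_const.mul
        (continuous_const.mul continuous_id))).measurable.ennreal_ofReal).aemeasurable
    have hg : AEMeasurable (fun x => ENNReal.ofReal (Real.exp ((1-l) * (-b * x)))) (μ i j) :=
      ((Real.continuous_exp.comp (continuous_const.mul
        (continuous_const.mul continuous_id))).measurable.ennreal_ofReal).aemeasurable
    have key := ENNReal.lintegral_mul_le_Lp_mul_Lq (μ i j) (conj_exp hl0 hl1) hf hg
    have e1 : ∀ x : ℝ, (fun x => ENNReal.ofReal (Real.exp (l * (-a * x)))) x *
        (fun x => ENNReal.ofReal (Real.exp ((1-l) * (-b * x)))) x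
        = ENNReal.ofReal (Real.exp (-t * x)) := by
      intro x
      rw [← ENNReal.ofReal_mul (Real.exp_pos _).le, ← Real.exp_add]
      congr 1
      rw [htdef]; ring
    calc (∫⁻ x, ENNReal.ofReal (Real.exp (-t * x)) ∂(μ i j))
          = ∫⁻ x, ENNReal.ofReal (Real.exp (l * (-a * x))) *
          ENNReal.ofReal (Real.exp ((1-l) * (-b * x))) ∂(μ i j) := by
          exact lintegral_congr fun x => (e1 x).symm
      _ ≤ (∫⁻ x, ENNReal.ofReal (Real.exp (l * (-a * x))) ^ (1/l) ∂(μ i j)) ^ (1/(1/l)) *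
          (∫⁻ x, ENNReal.ofReal (Real.exp ((1-l) * (-b * x))) ^ (1/(1-l)) ∂(μ i j)) ^ (1/(1/(1-l))) := key
      _ = (∫⁻ x, ENNReal.ofReal (Real.exp (-a * x)) ∂(μ i j)) ^ l *
          (∫⁻ x, ENNReal.ofReal (Real.exp (-b * x)) ∂(μ i j)) ^ (1 - l) := by
          rw [one_div_one_div, one_div_one_div]
          congr 1
          · congr 1
            refine lintegral_congr fun x => ?_
            rw [ENNReal.ofReal_rpow_of_pos (Real.exp_pos _), ← Real.exp_mul]
            congr 2
            field_simp
          · congr 1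
            refine lintegral_congr fun x => ?_
            rw [ENNReal.ofReal_rpow_of_pos (Real.exp_pos _), ← Real.exp_mul]
            congr 2
            field_simp
  -- back to ℝ≥0
  rw [← ENNReal.coe_le_coe, ENNReal.coe_mul, ENNReal.coe_rpow_of_nonneg _ hl0.le,
    ENNReal.coe_rpow_of_nonneg _ h1l.le, hcoe htdom, hcoe ha, hcoe hb]
  exact hhold

lemma tendsto_integral_atom (hsupp : ∀ i j, μ i j (Set.Iio 0) = 0) {β : ℝ}
    (hβ : (β : ℂ) ∈ LTdom μ) (i j : Fin p) :
    Tendsto (fun t : ℝ => ∫ x, Real.exp (-t * x) ∂(μ i j)) atTop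
      (𝓝 ((μ i j {0}).toReal)) := by
  have hind : ∫ x, Set.indicator ({0} : Set ℝ) (fun _ => (1:ℝ)) x ∂(μ i j)
      = (μ i j {0}).toReal := by
    rw [integral_indicator_const (1:ℝ) (measurableSet_singleton 0)]
    simp
    rfl
  rw [← hind]
  apply tendsto_integral_filter_of_dominated_convergence (fun x => Real.exp (-β * x))
  · exact Eventually.of_forall fun t =>
      (Real.continuous_exp.comp (continuous_const.mul continuous_id)).aestronglyMeasurable
  · filter_upwards [eventually_ge_atTop β] with t ht
    filter_upwards [ae_nonneg hsupp i j] with x hx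
    rw [Real.norm_eq_abs, Real.abs_exp]
    exact Real.exp_le_exp.mpr (by nlinarith)
  · exact integrable_of_mem hβ i j
  · filter_upwards [ae_nonneg hsupp i j] with x hx
    rcases eq_or_lt_of_le hx with h0 | h0
    · have he : ∀ t : ℝ, Real.exp (-t * x) = 1 := by
        intro t; rw [← h0]; simp
      have hi : Set.indicator ({0} : Set ℝ) (fun _ => (1:ℝ)) x = 1 := by
        rw [← h0]; simp
      simp only [he, hi]
      exact tendsto_const_nhds
    · have hi : Set.indicator ({0} : Set ℝ) (fun _ => (1:ℝ)) x = 0 :=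
        Set.indicator_of_notMem (by simpa using h0.ne') _
      rw [hi]
      have h1 : Tendsto (fun t : ℝ => -t * x) atTop atBot := by
        have h2 := (tendsto_id (α := ℝ)).atTop_mul_const h0
        have h3 : Tendsto (fun t : ℝ => -(t * x)) atTop atBot :=
          tendsto_neg_atTop_atBot.comp h2
        exact h3.congr fun t => (neg_mul t x).symm
      exact Real.tendsto_exp_atBot.comp h1

lemma specRad_nonneg (A : Matrix (Fin p) (Fin p) ℂ) : 0 ≤ specRad p A :=
  Real.sSup_nonneg (by rintro _ ⟨z, hz, rfl⟩; positivity)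

lemma specRad_mono (hsupp : ∀ i j, μ i j (Set.Iio 0) = 0) {s t : ℝ}
    (hs : (s : ℂ) ∈ LTdom μ) (hst : s ≤ t) :
    specRad p (lapT μ t) ≤ specRad p (lapT μ s) := by
  refine le_of_tendsto_of_tendsto' (tendsto_gelfand (lapT μ t))
    (tendsto_gelfand (lapT μ s)) fun n => ?_
  apply Real.rpow_le_rpow (norm_nonneg _) ?_ (by positivity)
  have ht := dom_mono hsupp hs hst
  rw [lapT_eq_map ht, lapT_eq_map hs, ← coe_nnnorm, ← coe_nnnorm, NNReal.coe_le_coe,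
    nnnorm_map_pow, nnnorm_map_pow]
  exact nuv_mono (entry_pow_mono (fun i j => Rmat_anti hsupp hs hst i j) n)

lemma specRad_holder (hsupp : ∀ i j, μ i j (Set.Iio 0) = 0) {a b l : ℝ}
    (ha : (a : ℂ) ∈ LTdom μ) (hb : (b : ℂ) ∈ LTdom μ) (hl0 : 0 < l) (hl1 : l < 1) :
    specRad p (lapT μ ((l * a + (1 - l) * b : ℝ) : ℂ)) ≤
      specRad p (lapT μ a) ^ l * specRad p (lapT μ b) ^ (1 - l) := by
  have htdom : ((l * a + (1 - l) * b : ℝ) : ℂ) ∈ LTdom μ := by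
    rcases le_total a b with hab | hab
    · exact dom_mono hsupp ha (by nlinarith)
    · exact dom_mono hsupp hb (by nlinarith)
  refine le_of_tendsto_of_tendsto' (tendsto_gelfand _)
    (((tendsto_gelfand (lapT μ a)).rpow_const (Or.inr hl0.le)).mul
      ((tendsto_gelfand (lapT μ b)).rpow_const (Or.inr (by linarith)))) fun n => ?_
  have base : ‖(lapT μ ((l * a + (1 - l) * b : ℝ) : ℂ)) ^ n‖ ≤
      ‖(lapT μ a) ^ n‖ ^ l * ‖(lapT μ b) ^ n‖ ^ (1 - l) := by
    rw [lapT_eq_map htdom, lapT_eq_map ha, lapT_eq_map hb, ← coe_nnnorm, ← coe_nnnorm,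
      ← coe_nnnorm, nnnorm_map_pow, nnnorm_map_pow, nnnorm_map_pow]
    have h := gm_nuv hl0 hl1 (gm_pow hl0 hl1 (fun i j => Rmat_holder hsupp ha hb hl0 hl1 i j) n)
    calc ((nuv (Rmat μ (l * a + (1 - l) * b) ^ n) : ℝ≥0) : ℝ)
        ≤ ((nuv (Rmat μ a ^ n) ^ l * nuv (Rmat μ b ^ n) ^ (1 - l) : ℝ≥0) : ℝ) :=
          NNReal.coe_le_coe.mpr h
      _ = _ := by rw [NNReal.coe_mul, NNReal.coe_rpow, NNReal.coe_rpow]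
  calc ‖(lapT μ ((l * a + (1 - l) * b : ℝ) : ℂ)) ^ n‖ ^ (1 / (n : ℝ))
      ≤ (‖(lapT μ a) ^ n‖ ^ l * ‖(lapT μ b) ^ n‖ ^ (1 - l)) ^ (1 / (n : ℝ)) :=
        Real.rpow_le_rpow (norm_nonneg _) base (by positivity)
    _ = _ := by
        rw [Real.mul_rpow (by positivity) (by positivity)]
        congr 1
        · rw [← Real.rpow_mul (norm_nonneg _), ← Real.rpow_mul (norm_nonneg _), mul_comm]
        · rw [← Real.rpow_mul (norm_nonneg _), ← Real.rpow_mul (norm_nonneg _), mul_comm]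

lemma norm_le_sum_entries (Z : Matrix (Fin p) (Fin p) ℂ) :
    ‖Z‖ ≤ ∑ i, ∑ j, ‖Z i j‖ := by
  rw [← coe_nnnorm]
  have h : ‖Z‖₊ ≤ ∑ i, ∑ j, ‖Z i j‖₊ := by
    rw [Matrix.linfty_opNNNorm_def]
    exact Finset.sup_le fun i _ =>
      Finset.single_le_sum (f := fun i => ∑ j, ‖Z i j‖₊) (fun _ _ => zero_le)
        (Finset.mem_univ i)
  calc ((‖Z‖₊ : ℝ≥0) : ℝ) ≤ ((∑ i, ∑ j, ‖Z i j‖₊ : ℝ≥0) : ℝ) := NNReal.coe_le_coe.mpr h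
    _ = ∑ i, ∑ j, ‖Z i j‖ := by push_cast; rfl

lemma key (hsupp : ∀ i j, μ i j (Set.Iio 0) = 0) (hA2 : specRad p (atomMat μ) < 1)
    {α β : ℝ} (hα : (α : ℂ) ∈ LTdom μ) (h1 : specRad p (lapT μ α) = 1)
    (hβ : (β : ℂ) ∈ LTdom μ) (h2 : specRad p (lapT μ β) = 1) (hlt : α < β) : False := by
  -- the spectral radius is identically one to the right of β
  have hone : ∀ t : ℝ, β ≤ t → specRad p (lapT μ t) = 1 := by
    intro t ht
    have h_le : specRad p (lapT μ t) ≤ 1 := h2 ▸ specRad_mono hsupp hβ ht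
    rcases eq_or_lt_of_le ht with rfl | hbt
    · exact h2
    · set l : ℝ := (t - β) / (t - α) with hldef
      have hl0 : 0 < l := div_pos (by linarith) (by linarith)
      have hl1 : l < 1 := (div_lt_one (by linarith)).mpr (by linarith)
      have hta : t - α ≠ 0 := sub_ne_zero.mpr (ne_of_gt (by linarith))
      have hco : l * α + (1 - l) * t = β := by
        rw [hldef]
        field_simp [hta]
        ring
      have hh := specRad_holder hsupp hα (dom_mono hsupp hα (by linarith : α ≤ t)) hl0 hl1
      rw [hco, h2, h1, Real.one_rpow, one_mul] at hh
      have hge : 1 ≤ specRad p (lapT μ t) := by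
        by_contra hcon
        push_neg at hcon
        have := Real.rpow_lt_one (z := 1 - l) (specRad_nonneg _) hcon (by linarith)
        linarith
      exact le_antisymm h_le hge
  -- a power of the atom matrix has norm < 1
  obtain ⟨m, hm⟩ : ∃ m : ℕ, ‖atomMat μ ^ (m + 1)‖ ^ (1 / ((m : ℝ) + 1)) < 1 := by
    have hev := (tendsto_gelfand (atomMat μ)).eventually_lt_const hA2
    obtain ⟨N, hN⟩ := eventually_atTop.mp hev
    refine ⟨N, ?_⟩
    have := hN (N + 1) (by omega)
    push_cast at this ⊢
    exact this
  have hBn : ‖atomMat μ ^ (m + 1)‖ < 1 := by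
    by_contra hcon
    push_neg at hcon
    have := Real.one_le_rpow hcon (by positivity : (0:ℝ) ≤ 1 / ((m : ℝ) + 1))
    linarith
  -- entrywise convergence of the Laplace transform to the atom matrix
  have hent : ∀ i j, Tendsto (fun t : ℝ => lapT μ t i j) atTop (𝓝 (atomMat μ i j)) := by
    intro i j
    have h0 := (Complex.continuous_ofReal.tendsto _).comp (tendsto_integral_atom hsupp hβ i j)
    exact h0.congr fun t => (lapT_apply_ofReal t i j).symm
  have hpow : ∀ n (i j : Fin p),
      Tendsto (fun t : ℝ => ((lapT μ t) ^ n) i j) atTop (𝓝 ((atomMat μ ^ n) i j)) := by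
    intro n
    induction n with
    | zero => intro i j; simp only [pow_zero]; exact tendsto_const_nhds
    | succ n ih =>
      intro i j
      simp only [pow_succ, Matrix.mul_apply]
      exact tendsto_finset_sum _ fun k _ => (ih i k).mul (hent k j)
  have hsub : Tendsto (fun t : ℝ => ‖(lapT μ t) ^ (m + 1) - atomMat μ ^ (m + 1)‖) atTop (𝓝 0) := by
    apply squeeze_zero (fun t => norm_nonneg _) (fun t => norm_le_sum_entries _)
    have hz : (0 : ℝ) = ∑ _i : Fin p, ∑ _j : Fin p, (0:ℝ) := by simp
    rw [hz]
    refine tendsto_finset_sum _ fun i _ => tendsto_finset_sum _ fun j _ => ?_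
    have hd := ((hpow (m + 1) i j).sub
      (tendsto_const_nhds (x := (atomMat μ ^ (m + 1)) i j))).norm
    simpa [Matrix.sub_apply] using hd
  have hlim : Tendsto (fun t : ℝ => ‖(lapT μ t) ^ (m + 1)‖) atTop
      (𝓝 ‖atomMat μ ^ (m + 1)‖) := by
    apply tendsto_iff_dist_tendsto_zero.mpr
    apply squeeze_zero (fun t => dist_nonneg) (fun t => ?_) hsub
    rw [Real.dist_eq]
    exact abs_norm_sub_norm_le _ _
  obtain ⟨t, htlt, htβ⟩ := ((hlim.eventually_lt_const hBn).and (eventually_ge_atTop β)).exists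
  have hsp := specRad_le_pow (lapT μ t) m
  have hfin : specRad p (lapT μ t) < 1 :=
    lt_of_le_of_lt hsp (Real.rpow_lt_one (norm_nonneg _) htlt (by positivity))
  rw [hone t htβ] at hfin
  exact lt_irrefl _ hfin

end Measures

end MalthusAux

/-- Under (A1) and (A2), there is at most one real `α` with
`ρ(Lμ(α)) = 1`. -/
theorem malthusian_parameter_unique {p : ℕ} (μ : Fin p → Fin p → Measure ℝ)
    (hloc : ∀ i j, IsLocallyFiniteMeasure (μ i j))
    (hsupp : ∀ i j, μ i j (Set.Iio 0) = 0)
    (hA1 : ∃ ϑ : ℝ, (ϑ : ℂ) ∈ interior (LTdom μ))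
    (hA2 : specRad p (atomMat μ) < 1) :
    ∀ α β : ℝ, (α : ℂ) ∈ LTdom μ → specRad p (lapT μ α) = 1 →
      (β : ℂ) ∈ LTdom μ → specRad p (lapT μ β) = 1 → α = β := by
  intro α β hα h1 hβ h2
  rcases Nat.eq_zero_or_pos p with hp | hp
  · exfalso
    rw [MalthusAux.specRad_of_isEmpty hp] at h1
    exact zero_ne_one h1
  haveI : Nonempty (Fin p) := Fin.pos_iff_nonempty.mp hp
  by_contra hne
  rcases lt_or_gt_of_ne hne with h | h
  · exact MalthusAux.key hsupp hA2 hα h1 hβ h2 h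
  · exact MalthusAux.key hsupp hA2 hβ h2 hα h1 h
end
end

section
/- Let μ be a p×p matrix of locally finite measures on [0,∞) satisfying (A1) and (A2). If the set Λ = {λ ∈ D(Lμ) : det(I_p − Lμ(λ)) = 0} is non-empty, then condition (A3) holds, i.e., there exists θ ∈ D(Lμ) ∩ ℝ with 1 ≤ ρ(Lμ(θ)) < ∞. -/
open MeasureTheory Filter Topology
open scoped ENNReal NNReal

noncomputable section

attribute [local instance] Matrix.linftyOpNormedRing Matrix.linftyOpNormedAlgebra

/-- Entrywise domination by a nonnegative real matrix is preserved by powers. -/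
lemma entry_pow_bound {p : ℕ} (A : Matrix (Fin p) (Fin p) ℂ) (C : Matrix (Fin p) (Fin p) ℝ)
    (hC : ∀ i j, 0 ≤ C i j) (hAC : ∀ i j, ‖A i j‖ ≤ C i j) (n : ℕ) :
    ∀ i j, 0 ≤ (C ^ n) i j ∧ ‖(A ^ n) i j‖ ≤ (C ^ n) i j := by
  induction n with
  | zero =>
    intro i j
    simp only [pow_zero, Matrix.one_apply]
    by_cases h : i = j <;> simp [h]
  | succ n ih =>
    intro i j
    rw [pow_succ', pow_succ', Matrix.mul_apply, Matrix.mul_apply]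
    constructor
    · exact Finset.sum_nonneg fun k _ => mul_nonneg (hC i k) ((ih k j).1)
    · refine (norm_sum_le _ _).trans (Finset.sum_le_sum fun k _ => ?_)
      rw [norm_mul]
      exact mul_le_mul (hAC i k) (ih k j).2 (norm_nonneg _) (hC i k)

/-- Monotonicity of the `l∞` operator norm under entrywise norm domination. -/
lemma linfty_norm_mono {p : ℕ} (A B : Matrix (Fin p) (Fin p) ℂ)
    (h : ∀ i j, ‖A i j‖ ≤ ‖B i j‖) : ‖A‖ ≤ ‖B‖ := by
  rw [Matrix.linfty_opNorm_def, Matrix.linfty_opNorm_def]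
  refine NNReal.coe_le_coe.mpr (Finset.sup_mono_fun fun i _ => Finset.sum_le_sum fun j _ => ?_)
  rw [← NNReal.coe_le_coe]
  simpa using h i j

/-- Under (A1) and (A2), if `Λ` is non-empty then (A3) holds:
there exists a real `θ ∈ D(Lμ)` with `1 ≤ ρ(Lμ(θ))`. -/
theorem lambda_nonempty_implies_A3 {p : ℕ} (μ : Fin p → Fin p → Measure ℝ)
    (hloc : ∀ i j, IsLocallyFiniteMeasure (μ i j))
    (hsupp : ∀ i j, μ i j (Set.Iio 0) = 0)
    (hA1 : ∃ ϑ : ℝ, (ϑ : ℂ) ∈ interior (LTdom μ))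
    (hA2 : specRad p (atomMat μ) < 1)
    (hΛ : (LambdaSet μ).Nonempty) :
    ∃ θ : ℝ, (θ : ℂ) ∈ LTdom μ ∧ 1 ≤ specRad p (lapT μ θ) := by
  obtain ⟨z, hzdom, hzdet⟩ := hΛ
  -- rule out `p = 0`
  rcases Nat.eq_zero_or_pos p with hp | hp
  · subst hp
    rw [Matrix.det_isEmpty] at hzdet
    exact absurd hzdet one_ne_zero
  haveI : Nonempty (Fin p) := ⟨⟨0, hp⟩⟩
  set θ : ℝ := z.re with hθ
  have hθdom : (θ : ℂ) ∈ LTdom μ := by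
    intro i j
    simpa [LTdom, hθ] using hzdom i j
  refine ⟨θ, hθdom, ?_⟩
  set A : Matrix (Fin p) (Fin p) ℂ := lapT μ z with hA
  set C : Matrix (Fin p) (Fin p) ℝ := Matrix.of fun i j => ∫ x, Real.exp (-θ * x) ∂(μ i j)
    with hCdef
  have hC : ∀ i j, 0 ≤ C i j := fun i j =>
    integral_nonneg fun x => (Real.exp_pos _).le
  have hB : lapT μ (θ : ℂ) = C.map Complex.ofReal := by
    ext i j
    have : ∀ x : ℝ, Complex.exp (-(θ : ℂ) * x) = ((Real.exp (-θ * x) : ℝ) : ℂ) := by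
      intro x
      rw [Complex.ofReal_exp]
      push_cast
      ring_nf
    simp only [lapT, Matrix.of_apply, Matrix.map_apply, hCdef]
    rw [show (fun x : ℝ => Complex.exp (-(θ:ℂ) * x)) = fun x : ℝ => ((Real.exp (-θ * x) : ℝ) : ℂ)
      from funext this]
    exact integral_ofReal
  have hAC : ∀ i j, ‖A i j‖ ≤ C i j := by
    intro i j
    have h1 : ‖A i j‖ ≤ ∫ x, ‖Complex.exp (-z * x)‖ ∂(μ i j) :=
      norm_integral_le_integral_norm _
    have h2 : ∀ x : ℝ, ‖Complex.exp (-z * x)‖ = Real.exp (-θ * x) := by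
      intro x
      rw [Complex.norm_exp]
      congr 1
      simp [hθ, Complex.mul_re]
    have h3 : ∫ x, ‖Complex.exp (-z * x)‖ ∂(μ i j) = C i j := by
      simp only [hCdef, Matrix.of_apply]
      exact integral_congr_ae (Filter.Eventually.of_forall fun x => h2 x)
    exact h3 ▸ h1
  -- 1 is in the spectrum of A
  have h1spec : (1 : ℂ) ∈ spectrum ℂ A := by
    rw [spectrum.mem_iff]
    intro hu
    rw [Matrix.isUnit_iff_isUnit_det] at hu
    have : (algebraMap ℂ (Matrix (Fin p) (Fin p) ℂ)) 1 - A = 1 - A := by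
      simp
    rw [this, hzdet] at hu
    exact hu.ne_zero rfl
  -- spectral radius comparison via Gelfand's formula
  haveI : Nontrivial (Matrix (Fin p) (Fin p) ℂ) := inferInstance
  have hpow : ∀ n : ℕ, ‖A ^ n‖₊ ≤ ‖(lapT μ (θ:ℂ)) ^ n‖₊ := by
    intro n
    rw [← NNReal.coe_le_coe]
    apply linfty_norm_mono
    intro i j
    have h := (entry_pow_bound A C hC hAC n i j)
    have hBn : ((lapT μ (θ:ℂ)) ^ n) i j = ((C ^ n) i j : ℂ) := by
      rw [hB, show (C.map Complex.ofReal) = (Complex.ofRealHom.mapMatrix C) from rfl,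
        ← map_pow]
      rfl
    rw [hBn]
    simpa [Complex.norm_real, abs_of_nonneg h.1] using h.2
  have hsr : spectralRadius ℂ A ≤ spectralRadius ℂ (lapT μ (θ:ℂ)) := by
    refine le_of_tendsto_of_tendsto
      (spectrum.pow_nnnorm_pow_one_div_tendsto_nhds_spectralRadius A)
      (spectrum.pow_nnnorm_pow_one_div_tendsto_nhds_spectralRadius (lapT μ (θ:ℂ)))
      (Filter.Eventually.of_forall fun n => ?_)
    exact ENNReal.rpow_le_rpow (by exact_mod_cast hpow n)
      (one_div_nonneg.mpr (Nat.cast_nonneg n))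
  have h1le : (1 : ℝ≥0∞) ≤ spectralRadius ℂ A := by
    have := le_iSup₂ (f := fun (k : ℂ) (_ : k ∈ spectrum ℂ A) => (‖k‖₊ : ℝ≥0∞)) 1 h1spec
    simp only [nnnorm_one, ENNReal.coe_one] at this
    exact this
  have h1le' : (1 : ℝ≥0∞) ≤ spectralRadius ℂ (lapT μ (θ:ℂ)) := h1le.trans hsr
  -- convert to specRad
  set S : Set ℝ := (fun w => ‖w‖) '' spectrum ℂ (lapT μ (θ:ℂ)) with hS
  have hfin : S.Finite := (Matrix.finite_spectrum _).image _
  have hbdd : BddAbove S := hfin.bddAbove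
  have hub : spectralRadius ℂ (lapT μ (θ:ℂ)) ≤ ENNReal.ofReal (sSup S) := by
    refine iSup₂_le fun k hk => ?_
    rw [← ENNReal.ofReal_coe_nnreal, coe_nnnorm]
    exact ENNReal.ofReal_le_ofReal (le_csSup hbdd ⟨k, hk, rfl⟩)
  have : (1 : ℝ≥0∞) ≤ ENNReal.ofReal (sSup S) := h1le'.trans hub
  have := ENNReal.one_le_ofReal.mp this
  simpa [specRad, hS] using this
end
end

section
/- Let μ be a p×p matrix of locally finite measures on [0,∞) satisfying (A1) and (A2), and write ν_s for the singular part (with respect to Lebesgue measure) of a measure ν, applied entrywise to matrices of measures. Then the following are equivalent: (A) there exists m ∈ ℕ such that the spectral radius of L(μ^{*m})_s(ϑ) is strictly less than 1; (B) there exists m ∈ ℕ such that ‖L(μ^{*m})_s(ϑ)‖ < 1. -/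
open MeasureTheory Filter Topology

noncomputable section

attribute [local instance] Matrix.linftyOpNormedRing

/-- The Laplace transform at `θ` of the singular part (w.r.t. Lebesgue measure) of the
`m`-fold convolution power: `L(μ^{*m})_s(θ)`. -/
def lapTsing {p : ℕ} (μ : Fin p → Fin p → Measure ℝ) (m : ℕ) (θ : ℝ) :
    Matrix (Fin p) (Fin p) ℂ :=
  Matrix.of fun i j =>
    ∫ x, Complex.exp (-(θ : ℂ) * x) ∂((mconvPow μ m i j).singularPart volume)


section ConvHelpers

open MeasureTheory Measure
open scoped ENNReal NNReal

private lemma measurable_add2 : Measurable fun x : ℝ × ℝ => x.1 + x.2 := by fun_prop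

private lemma conv_assoc3 (μ ν ρ : Measure ℝ) [SFinite μ] [SFinite ν] [SFinite ρ] :
    (μ.conv ν).conv ρ = μ.conv (ν.conv ρ) := by
  have h1 : (Measure.map (fun x : ℝ × ℝ => x.1 + x.2) (μ.prod ν)).prod ρ
      = Measure.map (Prod.map (fun x : ℝ × ℝ => x.1 + x.2) id) ((μ.prod ν).prod ρ) := by
    conv_lhs => rw [← Measure.map_id (μ := ρ)]
    exact Measure.map_prod_map _ _ measurable_add2 measurable_id
  have h2 : μ.prod (Measure.map (fun x : ℝ × ℝ => x.1 + x.2) (ν.prod ρ))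
      = Measure.map (Prod.map (id : ℝ → ℝ) (fun x : ℝ × ℝ => x.1 + x.2)) (μ.prod (ν.prod ρ)) := by
    conv_lhs => rw [← Measure.map_id (μ := μ)]
    exact Measure.map_prod_map _ _ measurable_id measurable_add2
  show Measure.map _ _ = Measure.map _ _
  unfold Measure.conv
  rw [h1, h2, ← Measure.prodAssoc_prod,
    Measure.map_map measurable_add2 (measurable_add2.prodMap measurable_id),
    Measure.map_map (measurable_id.prodMap measurable_add2) (by fun_prop),
    Measure.map_map measurable_add2 (by fun_prop)]
  congr 1
  funext q
  obtain ⟨⟨x, y⟩, z⟩ := q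
  simp [MeasurableEquiv.prodAssoc, add_assoc]

private lemma lintegral_conv_mul {f : ℝ → ℝ≥0∞} (hf : Measurable f)
    (hmul : ∀ x y, f (x + y) = f x * f y) (μ ν : Measure ℝ) [SFinite μ] [SFinite ν] :
    ∫⁻ x, f x ∂(μ.conv ν) = (∫⁻ x, f x ∂μ) * ∫⁻ x, f x ∂ν := by
  rw [Measure.conv, lintegral_map hf measurable_add2,
    lintegral_prod _ (by fun_prop)]
  simp_rw [hmul]
  rw [← lintegral_mul_const _ hf]
  exact lintegral_congr fun x => lintegral_const_mul _ hf

private lemma conv_ac_right (μ ν : Measure ℝ) [SFinite μ] [SFinite ν]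
    (h : ν ≪ (volume : Measure ℝ)) : μ.conv ν ≪ (volume : Measure ℝ) := by
  intro s hs
  obtain ⟨t, hst, htm, ht⟩ := exists_measurable_superset_of_null hs
  refine measure_mono_null hst ?_
  rw [Measure.conv, Measure.map_apply measurable_add2 htm,
    Measure.prod_apply (measurable_add2 htm)]
  have hz : ∀ x : ℝ, ν (Prod.mk x ⁻¹' ((fun p : ℝ × ℝ => p.1 + p.2) ⁻¹' t)) = 0 := by
    intro x
    apply h
    have hpre : (Prod.mk x ⁻¹' ((fun p : ℝ × ℝ => p.1 + p.2) ⁻¹' t))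
        = (fun y : ℝ => x + y) ⁻¹' t := rfl
    rw [hpre, measure_preimage_add volume x t]
    exact ht
  simp [hz]

private lemma conv_ac_left (μ ν : Measure ℝ) [SFinite μ] [SFinite ν]
    (h : μ ≪ (volume : Measure ℝ)) : μ.conv ν ≪ (volume : Measure ℝ) := by
  rw [Measure.conv_comm]
  exact conv_ac_right ν μ h

private lemma sfinite_singularPart (μ : Measure ℝ) [SFinite μ] :
    SFinite (μ.singularPart volume) :=
  sFinite_of_absolutelyContinuous
    (Measure.absolutelyContinuous_of_le (Measure.singularPart_le μ volume))

private lemma singularPart_conv (μ ν : Measure ℝ) [SFinite μ] [SFinite ν] :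
    (μ.conv ν).singularPart volume
      ≤ (μ.singularPart volume).conv (ν.singularPart volume) := by
  haveI := sfinite_singularPart μ
  haveI := sfinite_singularPart ν
  set μs := μ.singularPart volume with hμs
  set νs := ν.singularPart volume with hνs
  set μa := volume.withDensity (μ.rnDeriv volume) with hμa
  set νa := volume.withDensity (ν.rnDeriv volume) with hνa
  haveI : SFinite μa := sFinite_of_absolutelyContinuous
    (Measure.absolutelyContinuous_of_le (Measure.withDensity_rnDeriv_le μ volume))
  haveI : SFinite νa := sFinite_of_absolutelyContinuous
    (Measure.absolutelyContinuous_of_le (Measure.withDensity_rnDeriv_le ν volume))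
  have hμd : μ = μs + μa := (haveLebesgueDecomposition_add μ volume)
  have hνd : ν = νs + νa := (haveLebesgueDecomposition_add ν volume)
  have hsplit : μ.conv ν = μs.conv νs + (μs.conv νa + μa.conv ν) := by
    calc μ.conv ν = (μs + μa).conv ν := by rw [← hμd]
    _ = μs.conv ν + μa.conv ν := Measure.add_conv _ _ _
    _ = μs.conv (νs + νa) + μa.conv ν := by rw [← hνd]
    _ = μs.conv νs + μs.conv νa + μa.conv ν := by rw [Measure.conv_add]
    _ = μs.conv νs + (μs.conv νa + μa.conv ν) := by rw [add_assoc]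
  have hac : (μs.conv νa + μa.conv ν) ≪ (volume : Measure ℝ) := by
    have ha := conv_ac_right μs νa (withDensity_absolutelyContinuous volume (ν.rnDeriv volume))
    have hb := conv_ac_left μa ν (withDensity_absolutelyContinuous volume (μ.rnDeriv volume))
    intro s hs
    simp [ha hs, hb hs]
  calc (μ.conv ν).singularPart volume
      = (μs.conv νs + (μs.conv νa + μa.conv ν)).singularPart volume := by rw [← hsplit]
    _ = (μs.conv νs).singularPart volume
        + (μs.conv νa + μa.conv ν).singularPart volume :=
        Measure.singularPart_add _ _ _
    _ = (μs.conv νs).singularPart volume := by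
        rw [Measure.singularPart_eq_zero_of_ac hac, add_zero]
    _ ≤ μs.conv νs := Measure.singularPart_le _ _

end ConvHelpers


section MatrixHelpers

open MeasureTheory Measure
open scoped ENNReal NNReal

private lemma sfinite_finset_sum {ι : Type*} (s : Finset ι) (m : ι → Measure ℝ)
    (h : ∀ i, SFinite (m i)) : SFinite (∑ i ∈ s, m i) := by
  classical
  induction s using Finset.induction with
  | empty => simpa using inferInstanceAs (SFinite (0 : Measure ℝ))
  | @insert a s hnot ih =>
    rw [Finset.sum_insert hnot]
    haveI := h a
    haveI := ih
    infer_instance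

private lemma mconvPow_sfinite {p : ℕ} {μ : Fin p → Fin p → Measure ℝ}
    (hμ : ∀ i j, SFinite (μ i j)) (n : ℕ) : ∀ i j, SFinite (mconvPow μ n i j) := by
  induction n with
  | zero =>
    intro i j
    show SFinite (if i = j then Measure.dirac 0 else 0)
    split <;> infer_instance
  | succ n ih =>
    intro i j
    show SFinite (∑ k, (μ i k).conv (mconvPow μ n k j))
    refine sfinite_finset_sum _ _ fun k => ?_
    haveI := hμ i k; haveI := ih k j
    infer_instance

private lemma conv_finset_sum {ι : Type*} (μ : Measure ℝ) [SFinite μ] (s : Finset ι)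
    (m : ι → Measure ℝ) (h : ∀ i, SFinite (m i)) :
    μ.conv (∑ i ∈ s, m i) = ∑ i ∈ s, μ.conv (m i) := by
  classical
  induction s using Finset.induction with
  | empty => simpa using Measure.zero_conv μ
  | @insert a s hnot ih =>
    rw [Finset.sum_insert hnot, Finset.sum_insert hnot, ← ih]
    haveI := h a
    haveI := sfinite_finset_sum s m h
    exact Measure.conv_add _ _ _

private lemma finset_sum_conv {ι : Type*} (ν : Measure ℝ) [SFinite ν] (s : Finset ι)
    (m : ι → Measure ℝ) (h : ∀ i, SFinite (m i)) :
    (∑ i ∈ s, m i).conv ν = ∑ i ∈ s, (m i).conv ν := by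
  classical
  induction s using Finset.induction with
  | empty => simpa using Measure.conv_zero ν
  | @insert a s hnot ih =>
    rw [Finset.sum_insert hnot, Finset.sum_insert hnot, ← ih]
    haveI := h a
    haveI := sfinite_finset_sum s m h
    exact Measure.add_conv _ _ _

private lemma mconvPow_add {p : ℕ} {μ : Fin p → Fin p → Measure ℝ}
    (hμ : ∀ i j, SFinite (μ i j)) (a b : ℕ) (i j : Fin p) :
    mconvPow μ (a + b) i j = ∑ k, (mconvPow μ a i k).conv (mconvPow μ b k j) := by
  classical
  induction a generalizing i j with
  | zero =>
    rw [Nat.zero_add]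
    rw [Finset.sum_eq_single i]
    · show mconvPow μ b i j = (if i = i then Measure.dirac 0 else 0).conv (mconvPow μ b i j)
      haveI := mconvPow_sfinite hμ b i j
      rw [if_pos rfl, Measure.dirac_zero_conv]
    · intro k _ hk
      show (if i = k then Measure.dirac 0 else 0).conv (mconvPow μ b k j) = 0
      rw [if_neg (fun h => hk h.symm)]
      exact Measure.zero_conv _
    · intro h
      exact absurd (Finset.mem_univ i) h
  | succ a ih =>
    have hstep : mconvPow μ (a + 1 + b) i j = ∑ l, (μ i l).conv (mconvPow μ (a + b) l j) := by
      have : a + 1 + b = (a + b) + 1 := by omega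
      rw [this]
      rfl
    rw [hstep]
    have h1 : ∀ l, (μ i l).conv (mconvPow μ (a + b) l j)
        = ∑ k, (μ i l).conv ((mconvPow μ a l k).conv (mconvPow μ b k j)) := by
      intro l
      haveI := hμ i l
      rw [ih]
      refine conv_finset_sum _ _ _ fun k => ?_
      haveI := mconvPow_sfinite hμ a l k
      haveI := mconvPow_sfinite hμ b k j
      infer_instance
    simp_rw [h1]
    rw [Finset.sum_comm]
    refine Finset.sum_congr rfl fun k _ => ?_
    have h2 : ∀ l, (μ i l).conv ((mconvPow μ a l k).conv (mconvPow μ b k j))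
        = ((μ i l).conv (mconvPow μ a l k)).conv (mconvPow μ b k j) := by
      intro l
      haveI := hμ i l
      haveI := mconvPow_sfinite hμ a l k
      haveI := mconvPow_sfinite hμ b k j
      exact (conv_assoc3 _ _ _).symm
    simp_rw [h2]
    haveI := mconvPow_sfinite hμ b k j
    rw [← finset_sum_conv _ _ _ fun l => by
      haveI := hμ i l; haveI := mconvPow_sfinite hμ a l k; infer_instance]
    rfl

private lemma measure_add_le_add {a b c d : Measure ℝ} (h1 : a ≤ c) (h2 : b ≤ d) :
    a + b ≤ c + d := by
  rw [Measure.le_iff']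
  intro s
  rw [Measure.add_apply, Measure.add_apply]
  exact add_le_add (Measure.le_iff'.mp h1 s) (Measure.le_iff'.mp h2 s)

private lemma measure_sum_le_sum {ι : Type*} (s : Finset ι) (f g : ι → Measure ℝ)
    (h : ∀ i, f i ≤ g i) : ∑ i ∈ s, f i ≤ ∑ i ∈ s, g i := by
  classical
  induction s using Finset.induction with
  | empty => simp
  | @insert a s hnot ih =>
    rw [Finset.sum_insert hnot, Finset.sum_insert hnot]
    exact measure_add_le_add (h a) ih

private lemma singularPart_sum_le {ι : Type*} (s : Finset ι) (m : ι → Measure ℝ)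
    (h : ∀ i, SFinite (m i)) :
    (∑ i ∈ s, m i).singularPart volume ≤ ∑ i ∈ s, (m i).singularPart volume := by
  classical
  induction s using Finset.induction with
  | empty => simp
  | @insert a s hnot ih =>
    rw [Finset.sum_insert hnot, Finset.sum_insert hnot]
    haveI := h a
    haveI := sfinite_finset_sum s m h
    rw [Measure.singularPart_add]
    exact measure_add_le_add le_rfl ih

end MatrixHelpers

attribute [local instance] Matrix.linftyOpNormedAlgebra

open scoped ENNReal NNReal

/-- **Lemma 2.9, (A) ⟺ (B).** Under (A1) and (A2):
`∃ m ≥ 1, ρ(L(μ^{*m})_s(ϑ)) < 1` iff `∃ m ≥ 1, ‖L(μ^{*m})_s(ϑ)‖ < 1`. -/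
theorem singular_part_specRad_iff_norm {p : ℕ} (μ : Fin p → Fin p → Measure ℝ)
    (hloc : ∀ i j, IsLocallyFiniteMeasure (μ i j))
    (hsupp : ∀ i j, μ i j (Set.Iio 0) = 0)
    (ϑ : ℝ) (hA1 : (ϑ : ℂ) ∈ interior (LTdom μ))
    (hA2 : specRad p (atomMat μ) < 1) :
    (∃ m : ℕ, 0 < m ∧ specRad p (lapTsing μ m ϑ) < 1) ↔
      (∃ m : ℕ, 0 < m ∧ ‖lapTsing μ m ϑ‖ < 1) := by
  classical
  rcases Nat.eq_zero_or_pos p with hp0 | hp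
  · subst hp0
    have hz : ∀ X : Matrix (Fin 0) (Fin 0) ℂ, ‖X‖ < 1 ∧ specRad 0 X < 1 := by
      intro X
      have h1 : ‖X‖ = 0 := by rw [Subsingleton.elim X 0, norm_zero]
      have h2 : spectrum ℂ X = ∅ := by
        ext z
        simp [spectrum.mem_iff, isUnit_of_subsingleton]
      refine ⟨by rw [h1]; norm_num, ?_⟩
      rw [specRad, h2]
      simp [Real.sSup_empty]
    exact ⟨fun _ => ⟨1, one_pos, (hz _).1⟩, fun _ => ⟨1, one_pos, (hz _).2⟩⟩
  haveI : Nonempty (Fin p) := Fin.pos_iff_nonempty.mp hp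
  haveI : CompleteSpace (Matrix (Fin p) (Fin p) ℂ) := FiniteDimensional.complete ℂ _
  constructor
  · rintro ⟨m, hm, hρ⟩
    -- setup
    have hsf : ∀ i j, SFinite (μ i j) := fun i j => by haveI := hloc i j; infer_instance
    set e : ℝ → ℝ≥0∞ := fun x => ENNReal.ofReal (Real.exp (-ϑ * x)) with he_def
    have he : Measurable e := ENNReal.measurable_ofReal.comp (by fun_prop)
    have hemul : ∀ x y, e (x + y) = e x * e y := by
      intro x y
      simp only [he_def]
      have h : -ϑ * (x + y) = -ϑ * x + -ϑ * y := by ring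
      rw [h, Real.exp_add, ENNReal.ofReal_mul (Real.exp_nonneg _)]
    have hTfin : ∀ n i j, (∫⁻ x, e x ∂(mconvPow μ n i j)) ≠ ∞ := by
      intro n
      induction n with
      | zero =>
        intro i j
        show (∫⁻ x, e x ∂(if i = j then Measure.dirac (0 : ℝ) else 0)) ≠ ∞
        split
        · rw [lintegral_dirac' _ he]
          exact ENNReal.ofReal_ne_top
        · simp
      | succ n ih =>
        intro i j
        have hμfin : ∀ a b, (∫⁻ x, e x ∂(μ a b)) ≠ ∞ := by
          intro a b
          have hϑ : (ϑ : ℂ) ∈ LTdom μ := interior_subset hA1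
          have hint := (hϑ a b).lintegral_lt_top
          simp only [Complex.ofReal_re] at hint
          simpa [he_def] using hint.ne
        show (∫⁻ x, e x ∂(∑ k, (μ i k).conv (mconvPow μ n k j))) ≠ ∞
        rw [lintegral_finset_sum_measure]
        refine ENNReal.sum_ne_top.mpr fun k _ => ?_
        haveI := hsf i k
        haveI := mconvPow_sfinite hsf n k j
        rw [lintegral_conv_mul he hemul]
        exact ENNReal.mul_ne_top (hμfin i k) (ih k j)
    set S : ℕ → Fin p → Fin p → ℝ≥0∞ :=
      fun n i j => ∫⁻ x, e x ∂((mconvPow μ n i j).singularPart volume) with hS_def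
    have hSfin : ∀ n i j, S n i j ≠ ∞ := fun n i j =>
      ne_top_of_le_ne_top (hTfin n i j)
        (lintegral_mono' (Measure.singularPart_le _ _) le_rfl)
    have hSsub : ∀ a b i j, S (a + b) i j ≤ ∑ k, S a i k * S b k j := by
      intro a b i j
      have hsp : (mconvPow μ (a + b) i j).singularPart volume
          ≤ ∑ k, ((mconvPow μ a i k).singularPart volume).conv
              ((mconvPow μ b k j).singularPart volume) := by
        rw [mconvPow_add hsf a b i j]
        calc (∑ k, (mconvPow μ a i k).conv (mconvPow μ b k j)).singularPart volume
            ≤ ∑ k, ((mconvPow μ a i k).conv (mconvPow μ b k j)).singularPart volume :=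
              singularPart_sum_le Finset.univ
                (fun k => (mconvPow μ a i k).conv (mconvPow μ b k j)) fun k => by
                haveI := mconvPow_sfinite hsf a i k
                haveI := mconvPow_sfinite hsf b k j
                infer_instance
          _ ≤ (∑ k, ((mconvPow μ a i k).singularPart volume).conv
                ((mconvPow μ b k j).singularPart volume) : Measure ℝ) := by
              refine measure_sum_le_sum Finset.univ _ _ fun k => ?_
              haveI := mconvPow_sfinite hsf a i k
              haveI := mconvPow_sfinite hsf b k j
              exact singularPart_conv _ _
      calc S (a + b) i j
          ≤ ∫⁻ x, e x ∂(∑ k, ((mconvPow μ a i k).singularPart volume).conv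
              ((mconvPow μ b k j).singularPart volume)) := lintegral_mono' hsp le_rfl
        _ = ∑ k, S a i k * S b k j := by
            rw [lintegral_finset_sum_measure]
            refine Finset.sum_congr rfl fun k _ => ?_
            haveI := mconvPow_sfinite hsf a i k
            haveI := mconvPow_sfinite hsf b k j
            haveI := sfinite_singularPart (mconvPow μ a i k)
            haveI := sfinite_singularPart (mconvPow μ b k j)
            exact lintegral_conv_mul he hemul _ _
    have hentry : ∀ n i j, lapTsing μ n ϑ i j = ((S n i j).toReal : ℂ) := by
      intro n i j
      show (∫ x, Complex.exp (-(ϑ : ℂ) * x) ∂((mconvPow μ n i j).singularPart volume)) = _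
      have h1 : ∀ x : ℝ, Complex.exp (-(ϑ : ℂ) * x) = ((Real.exp (-ϑ * x) : ℝ) : ℂ) := by
        intro x
        rw [Complex.ofReal_exp]
        norm_cast
      simp_rw [h1]
      have h2 : (∫ x, Real.exp (-ϑ * x) ∂((mconvPow μ n i j).singularPart volume))
          = (S n i j).toReal := by
        rw [MeasureTheory.integral_eq_lintegral_of_nonneg_ae
          (Filter.Eventually.of_forall fun x => Real.exp_nonneg _)
          (Measurable.aestronglyMeasurable (by fun_prop))]
      calc (∫ x, ((Real.exp (-ϑ * x) : ℝ) : ℂ) ∂((mconvPow μ n i j).singularPart volume))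
          = ((∫ x, Real.exp (-ϑ * x) ∂((mconvPow μ n i j).singularPart volume) : ℝ) : ℂ) :=
            integral_ofReal
        _ = _ := by rw [h2]
    -- spectral radius in ℝ≥0∞
    set A := lapTsing μ m ϑ with hA_def
    have hρ' : spectralRadius ℂ A < 1 := by
      have hb : BddAbove ((fun z => ‖z‖) '' spectrum ℂ A) :=
        ((Matrix.finite_spectrum A).image _).bddAbove
      refine lt_of_le_of_lt ?_ (ENNReal.ofReal_lt_one.mpr hρ)
      rw [spectralRadius]
      refine iSup₂_le fun z hz => ?_
      have h1 : ‖z‖ ≤ specRad p A := le_csSup hb ⟨z, hz, rfl⟩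
      calc (‖z‖₊ : ℝ≥0∞) = ENNReal.ofReal ‖z‖ := (ofReal_norm z).symm
        _ ≤ ENNReal.ofReal (specRad p A) :=
            ENNReal.ofReal_le_ofReal h1
    have hev : ∀ᶠ n : ℕ in atTop, ((‖A ^ n‖₊ : ℝ≥0∞) ^ (1 / (n : ℝ))) < 1 :=
      (spectrum.pow_nnnorm_pow_one_div_tendsto_nhds_spectralRadius A).eventually_lt_const hρ'
    obtain ⟨k, hk1, hklt⟩ := ((eventually_ge_atTop 1).and hev).exists
    have hkpos : (0 : ℝ) < 1 / (k : ℝ) :=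
      one_div_pos.mpr (by exact_mod_cast Nat.lt_of_lt_of_le Nat.zero_lt_one hk1)
    have hAk : ‖A ^ k‖ < 1 := by
      by_contra hcon
      push_neg at hcon
      have h1 : (1 : ℝ≥0∞) ≤ (‖A ^ k‖₊ : ℝ≥0∞) := by exact_mod_cast hcon
      exact absurd (ENNReal.one_le_rpow h1 hkpos) (not_le.mpr hklt)
    -- matrix over ℝ≥0∞
    set B : Matrix (Fin p) (Fin p) ℝ≥0∞ := Matrix.of fun i j => S m i j with hB_def
    have hBent : ∀ i j, B i j = S m i j := fun i j => rfl
    have hBfin : ∀ k i j, (B ^ k) i j ≠ ∞ := by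
      intro k
      induction k with
      | zero =>
        intro i j
        rw [pow_zero]
        by_cases hij : i = j <;> simp [Matrix.one_apply, hij]
      | succ k ih =>
        intro i j
        rw [pow_succ, Matrix.mul_apply]
        exact ENNReal.sum_ne_top.mpr fun l _ =>
          ENNReal.mul_ne_top (ih i l) (hBent l j ▸ hSfin m l j)
    have hSB : ∀ k, 1 ≤ k → ∀ i j, S (m * k) i j ≤ (B ^ k) i j := by
      intro k
      induction k with
      | zero => omega
      | succ k ih =>
        intro _ i j
        rcases Nat.eq_zero_or_pos k with rfl | hkp
        · have h0 : m * (0 + 1) = m := by omega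
          rw [pow_one, h0, hBent]
        · have hmk : m * (k + 1) = m * k + m := by ring
          rw [hmk]
          refine le_trans (hSsub (m * k) m i j) ?_
          rw [pow_succ, Matrix.mul_apply]
          exact Finset.sum_le_sum fun l _ =>
            mul_le_mul' (ih hkp i l) (le_of_eq (hBent l j).symm)
    have hAB : ∀ k i j, (A ^ k) i j = (((B ^ k) i j).toReal : ℂ) := by
      intro k
      induction k with
      | zero =>
        intro i j
        rw [pow_zero, pow_zero]
        by_cases hij : i = j <;> simp [Matrix.one_apply, hij]
      | succ k ih =>
        intro i j
        rw [pow_succ, pow_succ, Matrix.mul_apply, Matrix.mul_apply]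
        have h1 : ∀ l, (A ^ k) i l * A l j = ((((B ^ k) i l * B l j).toReal : ℝ) : ℂ) := by
          intro l
          rw [ih, hA_def, hentry m l j, ENNReal.toReal_mul, hBent]
          push_cast
          ring
        simp_rw [h1]
        rw [ENNReal.toReal_sum fun l _ =>
          ENNReal.mul_ne_top (hBfin k i l) (hBent l j ▸ hSfin m l j)]
        push_cast
        rfl
    refine ⟨m * k, Nat.mul_pos hm (by omega), lt_of_le_of_lt ?_ hAk⟩
    have hnn : ‖lapTsing μ (m * k) ϑ‖₊ ≤ ‖A ^ k‖₊ := by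
      rw [Matrix.linfty_opNNNorm_def, Matrix.linfty_opNNNorm_def]
      refine Finset.sup_mono_fun fun i _ => Finset.sum_le_sum fun j _ => ?_
      have h1 : ‖lapTsing μ (m * k) ϑ i j‖ ≤ ‖(A ^ k) i j‖ := by
        rw [hentry (m * k) i j, hAB k i j, Complex.norm_real, Complex.norm_real,
          Real.norm_of_nonneg ENNReal.toReal_nonneg,
          Real.norm_of_nonneg ENNReal.toReal_nonneg]
        exact ENNReal.toReal_mono (hBfin k i j) (hSB k hk1 i j)
      exact_mod_cast h1
    exact_mod_cast hnn
  · rintro ⟨m, hm, hnorm⟩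
    refine ⟨m, hm, ?_⟩
    refine lt_of_le_of_lt (Real.sSup_le ?_ (norm_nonneg (lapTsing μ m ϑ))) hnorm
    rintro y ⟨z, hz, rfl⟩
    simpa using spectrum.norm_le_norm_of_mem hz
end
end

section
/- Let μ be a p×p matrix of locally finite measures on [0,∞) satisfying (A1) and (A2). If there exists m ∈ ℕ with ‖L(μ^{*m})_s(ϑ)‖ < 1, where ν_s denotes the singular part of ν with respect to Lebesgue measure taken entrywise, then limsup_{η→±∞} ‖Lμ(ϑ+iη)^m‖ < 1. -/
open MeasureTheory Filter Topology

noncomputable section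

attribute [local instance] Matrix.linftyOpNormedRing

/-! ### Auxiliary lemmas -/

section Aux

open Complex

/-- Entrywise norm bounds give a bound on the `L∞`-operator norm. -/
lemma matNorm_le_of_entrywise {n : ℕ} {A B : Matrix (Fin n) (Fin n) ℂ}
    (h : ∀ i j, ‖A i j‖ ≤ ‖B i j‖) : ‖A‖ ≤ ‖B‖ := by
  rw [Matrix.linfty_opNorm_def, Matrix.linfty_opNorm_def, NNReal.coe_le_coe]
  exact Finset.sup_mono_fun fun i _ => Finset.sum_le_sum fun j _ => by
    rw [← NNReal.coe_le_coe, coe_nnnorm, coe_nnnorm]; exact h i j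

/-- The `L∞`-operator norm is bounded by the sum of the norms of the entries. -/
lemma matNorm_le_sum {n : ℕ} (A : Matrix (Fin n) (Fin n) ℂ) :
    ‖A‖ ≤ ∑ i, ∑ j, ‖A i j‖ := by
  rw [Matrix.linfty_opNorm_def]
  have h : (Finset.univ.sup fun i : Fin n => ∑ j, ‖A i j‖₊) ≤ ∑ i, ∑ j, ‖A i j‖₊ :=
    Finset.sup_le fun i _ =>
      Finset.single_le_sum (f := fun i => ∑ j, ‖A i j‖₊) (fun i _ => zero_le)
        (Finset.mem_univ i)
  calc ((Finset.univ.sup fun i : Fin n => ∑ j, ‖A i j‖₊ : NNReal) : ℝ)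
      ≤ ((∑ i, ∑ j, ‖A i j‖₊ : NNReal) : ℝ) := by exact_mod_cast h
    _ = ∑ i, ∑ j, ‖A i j‖ := by push_cast; rfl

/-- A convolution of measures supported on `[0,∞)` is supported on `[0,∞)`. -/
lemma conv_null_Iio {α β : Measure ℝ} [SFinite α] [SFinite β]
    (hα : α (Set.Iio 0) = 0) (hβ : β (Set.Iio 0) = 0) :
    (α.conv β) (Set.Iio 0) = 0 := by
  rw [Measure.conv, Measure.map_apply measurable_add measurableSet_Iio]
  have hsub : (fun x : ℝ × ℝ => x.1 + x.2) ⁻¹' Set.Iio 0 ⊆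
      (Set.Iio 0 ×ˢ Set.univ) ∪ (Set.univ ×ˢ Set.Iio 0) := by
    rintro ⟨x, y⟩ hxy
    simp only [Set.mem_preimage, Set.mem_Iio] at hxy
    by_cases hx : x < 0
    · exact Or.inl ⟨hx, trivial⟩
    · exact Or.inr ⟨trivial, by push_neg at hx; simp only [Set.mem_Iio]; linarith⟩
  refine le_antisymm ?_ zero_le
  calc (α.prod β) ((fun x : ℝ × ℝ => x.1 + x.2) ⁻¹' Set.Iio 0)
      ≤ (α.prod β) ((Set.Iio 0 ×ˢ Set.univ) ∪ (Set.univ ×ˢ Set.Iio 0)) := measure_mono hsub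
    _ ≤ (α.prod β) (Set.Iio 0 ×ˢ Set.univ) + (α.prod β) (Set.univ ×ˢ Set.Iio 0) :=
        measure_union_le _ _
    _ = 0 := by rw [Measure.prod_prod, Measure.prod_prod, hα, hβ]; simp

/-- A convolution of measures supported on `[0,∞)` which are finite on compacts is finite on
compacts. -/
lemma conv_finiteOnCompacts {α β : Measure ℝ} [SFinite α] [SFinite β]
    [IsFiniteMeasureOnCompacts α] [IsFiniteMeasureOnCompacts β]
    (hα : α (Set.Iio 0) = 0) (hβ : β (Set.Iio 0) = 0) :
    IsFiniteMeasureOnCompacts (α.conv β) := by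
  constructor
  intro K hK
  obtain ⟨r, hr⟩ := hK.isBounded.subset_closedBall 0
  set s := max r 0 with hs
  have hKs : K ⊆ Set.Icc (-s) s := by
    intro x hx
    have h1 : dist x 0 ≤ r := hr hx
    rw [Real.dist_eq, sub_zero] at h1
    have h2 : |x| ≤ s := h1.trans (le_max_left _ _)
    exact ⟨(abs_le.mp h2).1, (abs_le.mp h2).2⟩
  have hsub : (fun x : ℝ × ℝ => x.1 + x.2) ⁻¹' Set.Icc (-s) s ⊆
      (Set.Icc 0 s ×ˢ Set.Icc 0 s) ∪ ((Set.Iio 0 ×ˢ Set.univ) ∪ (Set.univ ×ˢ Set.Iio 0)) := by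
    rintro ⟨x, y⟩ hxy
    simp only [Set.mem_preimage, Set.mem_Icc] at hxy
    by_cases hx : x < 0
    · exact Or.inr (Or.inl ⟨hx, trivial⟩)
    · by_cases hy : y < 0
      · exact Or.inr (Or.inr ⟨trivial, hy⟩)
      · push_neg at hx hy
        exact Or.inl ⟨⟨hx, by linarith [hxy.2]⟩, ⟨hy, by linarith [hxy.2]⟩⟩
  calc (α.conv β) K ≤ (α.conv β) (Set.Icc (-s) s) := measure_mono hKs
    _ = (α.prod β) ((fun x : ℝ × ℝ => x.1 + x.2) ⁻¹' Set.Icc (-s) s) := by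
        rw [Measure.conv, Measure.map_apply measurable_add measurableSet_Icc]
    _ ≤ (α.prod β) (Set.Icc 0 s ×ˢ Set.Icc 0 s)
        + ((α.prod β) (Set.Iio 0 ×ˢ Set.univ) + (α.prod β) (Set.univ ×ˢ Set.Iio 0)) :=
        le_trans (measure_mono hsub) (le_trans (measure_union_le _ _)
          (add_le_add le_rfl (measure_union_le _ _)))
    _ = α (Set.Icc 0 s) * β (Set.Icc 0 s) := by
        rw [Measure.prod_prod, Measure.prod_prod, Measure.prod_prod, hα, hβ]; simp
    _ < ⊤ := ENNReal.mul_lt_top isCompact_Icc.measure_lt_top isCompact_Icc.measure_lt_top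

/-- The entries of the matrix convolution powers are finite on compacts and supported
on `[0,∞)`. -/
lemma mconvPow_props {p : ℕ} (μ : Fin p → Fin p → Measure ℝ)
    (hloc : ∀ i j, IsLocallyFiniteMeasure (μ i j))
    (hsupp : ∀ i j, μ i j (Set.Iio 0) = 0) :
    ∀ n i j, IsFiniteMeasureOnCompacts (mconvPow μ n i j) ∧
      (mconvPow μ n i j) (Set.Iio 0) = 0 := by
  intro n
  induction n with
  | zero =>
    intro i j
    by_cases h : i = j <;> simp only [mconvPow, h, if_true, if_false]
    · exact ⟨inferInstance, by rw [Measure.dirac_apply' _ measurableSet_Iio]; simp⟩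
    · exact ⟨inferInstance, rfl⟩
  | succ n ih =>
    intro i j
    have hconv : ∀ k, IsFiniteMeasureOnCompacts ((μ i k).conv (mconvPow μ n k j)) ∧
        ((μ i k).conv (mconvPow μ n k j)) (Set.Iio 0) = 0 := by
      intro k
      haveI := (ih k j).1
      haveI := hloc i k
      exact ⟨conv_finiteOnCompacts (hsupp i k) (ih k j).2,
        conv_null_Iio (hsupp i k) (ih k j).2⟩
    have hentry : mconvPow μ (n + 1) i j = ∑ k, (μ i k).conv (mconvPow μ n k j) := rfl
    constructor
    · constructor
      intro K hK
      rw [hentry, Measure.finset_sum_apply]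
      exact ENNReal.sum_lt_top.2 fun k _ => by
        haveI := (hconv k).1; exact hK.measure_lt_top
    · rw [hentry, Measure.finset_sum_apply]
      exact Finset.sum_eq_zero fun k _ => (hconv k).2

/-- Integrability of the exponential kernel with respect to a convolution. -/
lemma integrable_exp_conv {ϑ : ℝ} {α β : Measure ℝ} [SFinite α] [SFinite β]
    (hα : Integrable (fun x => Real.exp (-ϑ * x)) α)
    (hβ : Integrable (fun x => Real.exp (-ϑ * x)) β) :
    Integrable (fun x => Real.exp (-ϑ * x)) (α.conv β) := by
  rw [Measure.conv, integrable_map_measure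
    (Continuous.aestronglyMeasurable (by fun_prop)) measurable_add.aemeasurable]
  have heq : ((fun x => Real.exp (-ϑ * x)) ∘ fun q : ℝ × ℝ => q.1 + q.2)
      = fun q : ℝ × ℝ => Real.exp (-ϑ * q.1) * Real.exp (-ϑ * q.2) := by
    funext q
    simp only [Function.comp_apply, ← Real.exp_add]
    congr 1; ring
  rw [heq]
  exact hα.mul_prod hβ

/-- Integrability of the complex exponential kernel follows from that of the real one. -/
lemma integrable_cexp_of_re {ϑ : ℝ} {ν : Measure ℝ} {z : ℂ} (hz : z.re = ϑ)
    (h : Integrable (fun x => Real.exp (-ϑ * x)) ν) :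
    Integrable (fun x : ℝ => Complex.exp (-z * x)) ν := by
  refine h.mono' (Continuous.aestronglyMeasurable (by fun_prop)) ?_
  filter_upwards with x
  have hre : (-z * (x : ℂ)).re = -ϑ * x := by
    simp [Complex.mul_re, hz]
  rw [Complex.norm_exp, hre]

/-- The Laplace transform of a convolution is the product of the Laplace transforms. -/
lemma integral_cexp_conv {ϑ : ℝ} {α β : Measure ℝ} [SFinite α] [SFinite β] {z : ℂ}
    (hz : z.re = ϑ)
    (hα : Integrable (fun x => Real.exp (-ϑ * x)) α)
    (hβ : Integrable (fun x => Real.exp (-ϑ * x)) β) :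
    ∫ x, Complex.exp (-z * x) ∂(α.conv β)
      = (∫ x, Complex.exp (-z * x) ∂α) * ∫ x, Complex.exp (-z * x) ∂β := by
  rw [Measure.conv, integral_map measurable_add.aemeasurable
    (Continuous.aestronglyMeasurable (by fun_prop))]
  have heq : ∀ q : ℝ × ℝ, Complex.exp (-z * ((q.1 + q.2 : ℝ) : ℂ))
      = Complex.exp (-z * q.1) * Complex.exp (-z * q.2) := by
    intro q
    rw [← Complex.exp_add]
    congr 1
    push_cast
    ring
  simp_rw [heq]
  exact integral_prod_mul (fun x : ℝ => Complex.exp (-z * x)) (fun x : ℝ => Complex.exp (-z * x))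

/-- Laplace transform of the matrix convolution power is the matrix power of the Laplace
transform, together with integrability of the entries. -/
lemma lapT_mconvPow {p : ℕ} (μ : Fin p → Fin p → Measure ℝ)
    (hloc : ∀ i j, IsLocallyFiniteMeasure (μ i j))
    (hsupp : ∀ i j, μ i j (Set.Iio 0) = 0)
    {ϑ : ℝ} (hint : ∀ i j, Integrable (fun x => Real.exp (-ϑ * x)) (μ i j))
    {z : ℂ} (hz : z.re = ϑ) :
    ∀ n, lapT (mconvPow μ n) z = lapT μ z ^ n ∧
      ∀ i j, Integrable (fun x => Real.exp (-ϑ * x)) (mconvPow μ n i j) := by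
  intro n
  induction n with
  | zero =>
    constructor
    · ext i j
      by_cases h : i = j <;>
        simp [lapT, mconvPow, h, Matrix.one_apply, integral_dirac]
    · intro i j
      by_cases h : i = j <;> simp only [mconvPow, h, if_true, if_false]
      · exact (integrable_const _).congr (ae_eq_dirac _).symm
      · exact integrable_zero_measure
  | succ n ih =>
    obtain ⟨ihL, ihI⟩ := ih
    haveI : ∀ k j, SigmaFinite (mconvPow μ n k j) := fun k j => by
      haveI := (mconvPow_props μ hloc hsupp n k j).1
      infer_instance
    have hconvInt : ∀ i k j, Integrable (fun x => Real.exp (-ϑ * x))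
        ((μ i k).conv (mconvPow μ n k j)) := fun i k j => by
      haveI := hloc i k
      exact integrable_exp_conv (hint i k) (ihI k j)
    have hentry : ∀ i j, mconvPow μ (n + 1) i j = ∑ k, (μ i k).conv (mconvPow μ n k j) :=
      fun i j => rfl
    constructor
    · ext i j
      show ∫ x, Complex.exp (-z * x) ∂(mconvPow μ (n+1) i j) = (lapT μ z ^ (n+1)) i j
      rw [hentry i j,
        integral_finset_sum_measure (fun k _ => integrable_cexp_of_re hz (hconvInt i k j)),
        pow_succ', Matrix.mul_apply]
      refine Finset.sum_congr rfl fun k _ => ?_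
      haveI := hloc i k
      rw [integral_cexp_conv hz (hint i k) (ihI k j), ← ihL]
      rfl
    · intro i j
      rw [hentry i j]
      exact integrable_finset_sum_measure.2 fun k _ => hconvInt i k j

/-- Riemann–Lebesgue: the Laplace transform along the vertical line of the absolutely
continuous part tends to zero. -/
lemma tendsto_lap_ac {ϑ : ℝ} (ν : Measure ℝ) [SigmaFinite ν]
    (hint : Integrable (fun x => Real.exp (-ϑ * x)) ν) :
    Filter.Tendsto (fun η : ℝ => ∫ x, Complex.exp (-((ϑ : ℂ) + η * Complex.I) * x)
      ∂(volume.withDensity (ν.rnDeriv volume))) (cocompact ℝ) (𝓝 0) := by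
  set ρ : Measure ℝ := volume.withDensity (ν.rnDeriv volume) with hρdef
  have hac : ρ ≪ volume := withDensity_absolutelyContinuous _ _
  have hρle : ρ ≤ ν := Measure.withDensity_rnDeriv_le ν volume
  have hintρ : Integrable (fun x => Real.exp (-ϑ * x)) ρ := hint.mono_measure hρle
  have hcexp : Integrable (fun x : ℝ => Complex.exp (-(ϑ : ℂ) * x)) ρ :=
    integrable_cexp_of_re (by simp) hintρ
  set g : ℝ → ℂ := fun x => (ρ.rnDeriv volume x).toReal • Complex.exp (-(ϑ : ℂ) * x) with hg
  have hπ : (2 * Real.pi) ≠ 0 := mul_ne_zero two_ne_zero Real.pi_ne_zero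
  have key : ∀ η : ℝ, ∫ x, Complex.exp (-((ϑ : ℂ) + η * Complex.I) * x) ∂ρ
      = ∫ x, Real.fourierChar (-(x * (η / (2 * Real.pi)))) • g x ∂volume := by
    intro η
    rw [← MeasureTheory.integral_rnDeriv_smul hac
      (f := fun x : ℝ => Complex.exp (-((ϑ : ℂ) + η * Complex.I) * x))]
    congr 1
    funext x
    rw [Circle.smul_def, Real.fourierChar_apply, hg]
    simp only [smul_eq_mul, Complex.real_smul]
    rw [show (2 * Real.pi * (-(x * (η / (2 * Real.pi)))) : ℝ) = -(x * η) by field_simp,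
      show (-((ϑ : ℂ) + η * Complex.I) * x : ℂ)
        = ((-(x * η) : ℝ) : ℂ) * Complex.I + (-(ϑ : ℂ) * x) by push_cast; ring,
      Complex.exp_add]
    ring
  have hgint : Integrable g volume := (MeasureTheory.integrable_rnDeriv_smul_iff hac).2 hcexp
  have hη : Filter.Tendsto (fun η : ℝ => η / (2 * Real.pi)) (cocompact ℝ) (cocompact ℝ) := by
    have hmap := Homeomorph.map_cocompact (Homeomorph.mulRight₀ (2 * Real.pi)⁻¹
      (inv_ne_zero hπ))
    have hfun : ⇑(Homeomorph.mulRight₀ (2 * Real.pi)⁻¹ (inv_ne_zero hπ))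
        = fun η : ℝ => η / (2 * Real.pi) := by
      funext x
      simp [Homeomorph.mulRight₀, div_eq_mul_inv]
    rw [hfun] at hmap
    exact le_of_eq hmap
  have hRL := (Real.tendsto_integral_exp_smul_cocompact g).comp hη
  exact hRL.congr fun η => (key η).symm

end Aux

/-- **Lemma 2.9, (B) ⟹ (C).** Under (A1) and (A2), if
`‖L(μ^{*m})_s(ϑ)‖ < 1` for some `m ≥ 1`, then
`limsup_{η→±∞} ‖Lμ(ϑ+iη)^m‖ < 1`, i.e. `‖Lμ(ϑ+iη)^m‖ ≤ c < 1` for `|η|` large. -/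
theorem singular_norm_implies_limsup {p : ℕ} (μ : Fin p → Fin p → Measure ℝ)
    (hloc : ∀ i j, IsLocallyFiniteMeasure (μ i j))
    (hsupp : ∀ i j, μ i j (Set.Iio 0) = 0)
    (ϑ : ℝ) (hA1 : (ϑ : ℂ) ∈ interior (LTdom μ))
    (hA2 : specRad p (atomMat μ) < 1)
    (m : ℕ) (hm : 0 < m)
    (hB : ‖lapTsing μ m ϑ‖ < 1) :
    ∃ c : ℝ, c < 1 ∧ ∀ᶠ η : ℝ in (atBot ⊔ atTop),
      ‖(lapT μ (ϑ + η * Complex.I)) ^ m‖ ≤ c := by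
  classical
  have hint : ∀ i j, Integrable (fun x => Real.exp (-ϑ * x)) (μ i j) := by
    intro i j
    have h := interior_subset hA1 i j
    simpa using h
  have props := mconvPow_props μ hloc hsupp m
  haveI : ∀ i j, SigmaFinite (mconvPow μ m i j) := fun i j => by
    haveI := (props i j).1
    infer_instance
  have hms : ∀ i j, Integrable (fun x => Real.exp (-ϑ * x)) (mconvPow μ m i j) :=
    (lapT_mconvPow μ hloc hsupp hint (z := (ϑ : ℂ)) (by simp) m).2
  have hre : ∀ η : ℝ, ((ϑ : ℂ) + η * Complex.I).re = ϑ := by intro η; simp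
  have hpow : ∀ η : ℝ, lapT (mconvPow μ m) ((ϑ : ℂ) + η * Complex.I)
      = lapT μ ((ϑ : ℂ) + η * Complex.I) ^ m := fun η =>
    (lapT_mconvPow μ hloc hsupp hint (hre η) m).1
  set σ : Fin p → Fin p → Measure ℝ := fun i j => (mconvPow μ m i j).singularPart volume
    with hσdef
  set ρ : Fin p → Fin p → Measure ℝ :=
    fun i j => volume.withDensity ((mconvPow μ m i j).rnDeriv volume) with hρdef
  have hdec : ∀ i j, mconvPow μ m i j = σ i j + ρ i j := fun i j =>
    Measure.haveLebesgueDecomposition_add (mconvPow μ m i j) volume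
  have hσint : ∀ i j, Integrable (fun x => Real.exp (-ϑ * x)) (σ i j) := fun i j =>
    (hms i j).mono_measure (Measure.singularPart_le _ _)
  have hρint : ∀ i j, Integrable (fun x => Real.exp (-ϑ * x)) (ρ i j) := fun i j =>
    (hms i j).mono_measure (Measure.withDensity_rnDeriv_le _ _)
  have hsplit : ∀ η : ℝ, lapT μ ((ϑ : ℂ) + η * Complex.I) ^ m
      = Matrix.of (fun i j => ∫ x, Complex.exp (-((ϑ : ℂ) + η * Complex.I) * x) ∂(σ i j))
        + Matrix.of (fun i j => ∫ x, Complex.exp (-((ϑ : ℂ) + η * Complex.I) * x) ∂(ρ i j)) := by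
    intro η
    rw [← hpow η]
    ext i j
    show ∫ x, Complex.exp (-((ϑ : ℂ) + η * Complex.I) * x) ∂(mconvPow μ m i j) = _
    rw [hdec i j, integral_add_measure (integrable_cexp_of_re (hre η) (hσint i j))
      (integrable_cexp_of_re (hre η) (hρint i j))]
    rfl
  have hσnorm : ∀ (η : ℝ) i j,
      ‖∫ x, Complex.exp (-((ϑ : ℂ) + η * Complex.I) * x) ∂(σ i j)‖
        ≤ ‖lapTsing μ m ϑ i j‖ := by
    intro η i j
    have hentry : lapTsing μ m ϑ i j = ((∫ x, Real.exp (-ϑ * x) ∂(σ i j) : ℝ) : ℂ) := by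
      have h1 : (fun x : ℝ => Complex.exp (-(ϑ : ℂ) * x))
          = fun x : ℝ => ((Real.exp (-ϑ * x) : ℝ) : ℂ) := by
        funext x
        rw [Complex.ofReal_exp]
        norm_cast
      show (∫ x, Complex.exp (-(ϑ : ℂ) * x) ∂(σ i j)) = _
      rw [h1]
      exact integral_ofReal
    calc ‖∫ x, Complex.exp (-((ϑ : ℂ) + η * Complex.I) * x) ∂(σ i j)‖
        ≤ ∫ x, ‖Complex.exp (-((ϑ : ℂ) + η * Complex.I) * x)‖ ∂(σ i j) :=
          norm_integral_le_integral_norm _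
      _ = ∫ x, Real.exp (-ϑ * x) ∂(σ i j) := by
          refine integral_congr_ae (Filter.Eventually.of_forall fun x => ?_)
          show ‖Complex.exp (-((ϑ : ℂ) + η * Complex.I) * x)‖ = Real.exp (-ϑ * x)
          rw [Complex.norm_exp]
          congr 1
          simp [Complex.mul_re]
      _ ≤ ‖lapTsing μ m ϑ i j‖ := by
          rw [hentry, Complex.norm_real]
          exact le_abs_self _
  have hA : Filter.Tendsto (fun η : ℝ => ∑ i, ∑ j,
      ‖∫ x, Complex.exp (-((ϑ : ℂ) + η * Complex.I) * x) ∂(ρ i j)‖)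
      (cocompact ℝ) (𝓝 0) := by
    have hent : ∀ i j, Filter.Tendsto (fun η : ℝ =>
        ‖∫ x, Complex.exp (-((ϑ : ℂ) + η * Complex.I) * x) ∂(ρ i j)‖)
        (cocompact ℝ) (𝓝 0) := fun i j => by
      simpa using (tendsto_lap_ac (mconvPow μ m i j) (hms i j)).norm
    have hsum := tendsto_finset_sum (Finset.univ : Finset (Fin p))
      (fun i _ => tendsto_finset_sum (Finset.univ : Finset (Fin p)) (fun j _ => hent i j))
    simpa using hsum
  set ε : ℝ := (1 - ‖lapTsing μ m ϑ‖) / 2 with hεdef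
  have hε : 0 < ε := by
    have := norm_nonneg (lapTsing μ m ϑ)
    simp only [hεdef]
    linarith
  have hev : ∀ᶠ η : ℝ in cocompact ℝ, (∑ i, ∑ j,
      ‖∫ x, Complex.exp (-((ϑ : ℂ) + η * Complex.I) * x) ∂(ρ i j)‖) < ε :=
    hA.eventually (gt_mem_nhds hε)
  refine ⟨‖lapTsing μ m ϑ‖ + ε, by simp only [hεdef]; linarith, ?_⟩
  rw [← cocompact_eq_atBot_atTop]
  filter_upwards [hev] with η hη
  calc ‖lapT μ ((ϑ : ℂ) + η * Complex.I) ^ m‖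
      = ‖Matrix.of (fun i j => ∫ x, Complex.exp (-((ϑ : ℂ) + η * Complex.I) * x) ∂(σ i j))
        + Matrix.of (fun i j => ∫ x, Complex.exp (-((ϑ : ℂ) + η * Complex.I) * x) ∂(ρ i j))‖ := by
        rw [← hsplit η]
    _ ≤ ‖Matrix.of (fun i j => ∫ x, Complex.exp (-((ϑ : ℂ) + η * Complex.I) * x) ∂(σ i j))‖
        + ‖Matrix.of (fun i j => ∫ x, Complex.exp (-((ϑ : ℂ) + η * Complex.I) * x) ∂(ρ i j))‖ :=
        norm_add_le _ _
    _ ≤ ‖lapTsing μ m ϑ‖ + ∑ i, ∑ j,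
        ‖∫ x, Complex.exp (-((ϑ : ℂ) + η * Complex.I) * x) ∂(ρ i j)‖ :=
        add_le_add (matNorm_le_of_entrywise fun i j => hσnorm η i j)
          (le_trans (matNorm_le_sum _) (le_of_eq rfl))
    _ ≤ ‖lapTsing μ m ϑ‖ + ε := by linarith
end
end

section
/- Let μ be a p×p matrix of locally finite measures on [0,∞) satisfying (A1) and (A2). If there exists m ∈ ℕ with limsup_{η→±∞} ‖Lμ(ϑ+iη)^m‖ < 1, then there exists η₀ ≥ 0 such that sup_{|η| ≥ η₀} ‖(I_p − Lμ(ϑ+iη))^{−1}‖ < ∞ (in particular, I_p − Lμ(ϑ+iη) is invertible for |η| ≥ η₀). -/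
open MeasureTheory Filter Topology

noncomputable section

attribute [local instance] Matrix.linftyOpNormedRing

lemma mat_norm_le_aux {p : ℕ} (A : Matrix (Fin p) (Fin p) ℂ) {C : ℝ} (hC : 0 ≤ C)
    (h : ∀ i, ∑ j, ‖A i j‖ ≤ C) : ‖A‖ ≤ C := by
  rw [Matrix.linfty_opNorm_def]
  have : ((Finset.univ : Finset (Fin p)).sup fun i => ∑ j, ‖A i j‖₊) ≤ (⟨C, hC⟩ : NNReal) := by
    refine Finset.sup_le fun i _ => ?_
    have := h i
    refine NNReal.coe_le_coe.mp ?_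
    push_cast
    exact this
  exact_mod_cast this

lemma mat_one_norm_le {p : ℕ} : ‖(1 : Matrix (Fin p) (Fin p) ℂ)‖ ≤ 1 := by
  refine mat_norm_le_aux _ zero_le_one fun i => ?_
  rw [show (1 : Matrix (Fin p) (Fin p) ℂ) = Matrix.diagonal 1 from rfl]
  rw [Finset.sum_eq_single_of_mem i (Finset.mem_univ i)
    (fun j _ hij => by rw [Matrix.diagonal_apply_ne' _ hij, norm_zero])]
  simp

lemma key_unit_bound {p : ℕ} (A : Matrix (Fin p) (Fin p) ℂ) (m : ℕ) (c M : ℝ)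
    (hc0 : 0 ≤ c) (hc1 : c < 1) (hA : ‖A‖ ≤ M) (hAm : ‖A ^ m‖ ≤ c) :
    IsUnit (1 - A) ∧ ‖(1 - A)⁻¹‖ ≤
      (∑ k ∈ Finset.range m, M ^ k) * (‖(1 : Matrix (Fin p) (Fin p) ℂ)‖ - 1 + (1 - c)⁻¹) := by
  have hM0 : (0 : ℝ) ≤ M := le_trans (norm_nonneg A) hA
  have hnorm : ‖A ^ m‖ < 1 := lt_of_le_of_lt hAm hc1
  have hc : @CompleteSpace (Matrix (Fin p) (Fin p) ℂ)
      (@PseudoMetricSpace.toUniformSpace _ (@SeminormedRing.toPseudoMetricSpace _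
        (@NormedRing.toSeminormedRing _ Matrix.linftyOpNormedRing))) := by
    letI : NormedSpace ℂ (Matrix (Fin p) (Fin p) ℂ) := Matrix.linftyOpNormedSpace
    exact FiniteDimensional.complete ℂ _
  set u : (Matrix (Fin p) (Fin p) ℂ)ˣ := Units.oneSub (A ^ m) hnorm with hu
  set S : Matrix (Fin p) (Fin p) ℂ := ∑ k ∈ Finset.range m, A ^ k with hSdef
  have hS1 : S * (1 - A) = 1 - A ^ m := by
    have h := geom_sum_mul A m
    have h2 : S * (1 - A) = -(S * (A - 1)) := by noncomm_ring
    rw [h2, hSdef, h, neg_sub]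
  have hS2 : (1 - A) * S = 1 - A ^ m := by
    have h := mul_geom_sum A m
    have h2 : (1 - A) * S = -((A - 1) * S) := by noncomm_ring
    rw [h2, hSdef, h, neg_sub]
  set V : Matrix (Fin p) (Fin p) ℂ := ↑u⁻¹ with hV
  have huval : (u : Matrix (Fin p) (Fin p) ℂ) = 1 - A ^ m := rfl
  have huv : (1 - A) * (S * V) = 1 := by
    rw [← mul_assoc, hS2, ← huval, hV]
    exact u.mul_inv
  have hvu : (V * S) * (1 - A) = 1 := by
    rw [mul_assoc, hS1, ← huval, hV]
    exact u.inv_mul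
  have hb : (V * S : Matrix (Fin p) (Fin p) ℂ) = S * V :=
    left_inv_eq_right_inv hvu huv
  have hvu' : (S * V) * (1 - A) = 1 := by rw [← hb]; exact hvu
  set w : (Matrix (Fin p) (Fin p) ℂ)ˣ := ⟨1 - A, S * V, huv, hvu'⟩ with hw
  refine ⟨⟨w, rfl⟩, ?_⟩
  have hinv : (1 - A)⁻¹ = S * V := by
    rw [Matrix.nonsing_inv_eq_ringInverse]
    exact Ring.inverse_unit w
  rw [hinv]
  have hpow : ∀ k : ℕ, ‖A ^ k‖ ≤ M ^ k := by
    intro k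
    induction k with
    | zero => rw [pow_zero, pow_zero]; exact mat_one_norm_le
    | succ n ih =>
      calc ‖A ^ (n + 1)‖ = ‖A * A ^ n‖ := by rw [pow_succ']
        _ ≤ ‖A‖ * ‖A ^ n‖ := norm_mul_le _ _
        _ ≤ M * M ^ n := mul_le_mul hA ih (norm_nonneg _) hM0
        _ = M ^ (n + 1) := (pow_succ' M n).symm
  have hSK : ‖S‖ ≤ ∑ k ∈ Finset.range m, M ^ k := by
    refine le_trans (norm_sum_le _ _) (Finset.sum_le_sum fun k _ => hpow k)
  have hK0 : (0 : ℝ) ≤ ∑ k ∈ Finset.range m, M ^ k :=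
    Finset.sum_nonneg fun k _ => pow_nonneg hM0 k
  have huinv : ‖V‖ ≤
      ‖(1 : Matrix (Fin p) (Fin p) ℂ)‖ - 1 + (1 - c)⁻¹ := by
    have hVval : V = ∑' n : ℕ, (A ^ m) ^ n := rfl
    have h1 : ‖V‖ ≤
        ‖(1 : Matrix (Fin p) (Fin p) ℂ)‖ - 1 + (1 - ‖A ^ m‖)⁻¹ := by
      rw [hVval]; exact tsum_geometric_le_of_norm_lt_one (A ^ m) hnorm
    have h2 : (1 - ‖A ^ m‖)⁻¹ ≤ (1 - c)⁻¹ := by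
      apply inv_anti₀ (by linarith) (by linarith)
    linarith
  calc ‖S * V‖ ≤ ‖S‖ * ‖V‖ := norm_mul_le _ _
    _ ≤ (∑ k ∈ Finset.range m, M ^ k) *
        (‖(1 : Matrix (Fin p) (Fin p) ℂ)‖ - 1 + (1 - c)⁻¹) :=
      mul_le_mul hSK huinv (norm_nonneg _) hK0

lemma lap_entry_bound (ϑ η : ℝ) (ν : Measure ℝ) :
    ‖∫ x, Complex.exp (-((ϑ : ℂ) + η * Complex.I) * x) ∂ν‖ ≤
      ∫ x, Real.exp (-ϑ * x) ∂ν := by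
  refine le_trans (norm_integral_le_integral_norm _) (le_of_eq ?_)
  congr 1
  ext x
  rw [Complex.norm_exp]
  congr 1
  simp [Complex.mul_re]

/-- **Lemma 2.9, (C) ⟹ (E).** Under (A1) and (A2), if
`limsup_{η→±∞} ‖Lμ(ϑ+iη)^m‖ < 1` for some `m ≥ 1`, then there is `η₀ ≥ 0` with
`sup_{|η|≥η₀} ‖(I_p − Lμ(ϑ+iη))⁻¹‖ < ∞`; in particular `I_p − Lμ(ϑ+iη)` is invertible
for `|η| ≥ η₀`. -/
theorem limsup_implies_resolvent_bound {p : ℕ} (μ : Fin p → Fin p → Measure ℝ)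
    (hloc : ∀ i j, IsLocallyFiniteMeasure (μ i j))
    (hsupp : ∀ i j, μ i j (Set.Iio 0) = 0)
    (ϑ : ℝ) (hA1 : (ϑ : ℂ) ∈ interior (LTdom μ))
    (hA2 : specRad p (atomMat μ) < 1)
    (hC : ∃ m : ℕ, 0 < m ∧ ∃ c : ℝ, c < 1 ∧ ∀ᶠ η : ℝ in (atBot ⊔ atTop),
      ‖(lapT μ (ϑ + η * Complex.I)) ^ m‖ ≤ c) :
    ∃ η₀ : ℝ, 0 ≤ η₀ ∧ ∃ C : ℝ, ∀ η : ℝ, η₀ ≤ |η| →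
      IsUnit (1 - lapT μ (ϑ + η * Complex.I)) ∧
      ‖(1 - lapT μ (ϑ + η * Complex.I))⁻¹‖ ≤ C := by
  obtain ⟨m, hm, c, hc1, hev⟩ := hC
  set M : ℝ := ∑ i, ∑ j, ∫ x, Real.exp (-ϑ * x) ∂(μ i j) with hM
  have hM0 : 0 ≤ M :=
    Finset.sum_nonneg fun i _ => Finset.sum_nonneg fun j _ =>
      integral_nonneg fun x => (Real.exp_pos _).le
  have hMb : ∀ η : ℝ, ‖lapT μ (ϑ + η * Complex.I)‖ ≤ M := by
    intro η
    refine mat_norm_le_aux _ hM0 fun i => ?_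
    have h1 : ∑ j, ‖lapT μ (ϑ + η * Complex.I) i j‖ ≤
        ∑ j, ∫ x, Real.exp (-ϑ * x) ∂(μ i j) :=
      Finset.sum_le_sum fun j _ => lap_entry_bound ϑ η (μ i j)
    refine le_trans h1 ?_
    exact Finset.single_le_sum
      (f := fun i => ∑ j, ∫ x, Real.exp (-ϑ * x) ∂(μ i j))
      (fun i _ => Finset.sum_nonneg fun j _ =>
        integral_nonneg fun x => (Real.exp_pos _).le)
      (Finset.mem_univ i)
  haveI : (atBot ⊔ atTop : Filter ℝ).NeBot := sup_neBot.mpr (Or.inl atBot_neBot)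
  obtain ⟨η', hη'⟩ := hev.exists
  have hc0 : 0 ≤ c := le_trans (norm_nonneg _) hη'
  rw [eventually_sup, eventually_atBot, eventually_atTop] at hev
  obtain ⟨⟨a, ha⟩, ⟨b, hb⟩⟩ := hev
  refine ⟨max (max |a| |b|) 0, le_max_right _ _,
    (∑ k ∈ Finset.range m, M ^ k) *
      (‖(1 : Matrix (Fin p) (Fin p) ℂ)‖ - 1 + (1 - c)⁻¹), fun η hη => ?_⟩
  have hAm : ‖(lapT μ (ϑ + η * Complex.I)) ^ m‖ ≤ c := by
    rcases le_or_gt 0 η with h0 | h0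
    · refine hb η ?_
      calc b ≤ |b| := le_abs_self b
        _ ≤ max (max |a| |b|) 0 := le_trans (le_max_right _ _) (le_max_left _ _)
        _ ≤ |η| := hη
        _ = η := abs_of_nonneg h0
    · refine ha η ?_
      have h2 : |a| ≤ |η| :=
        le_trans (le_trans (le_max_left _ _) (le_max_left _ _)) hη
      calc η = -|η| := by rw [abs_of_neg h0, neg_neg]
        _ ≤ -|a| := neg_le_neg h2
        _ ≤ a := neg_abs_le a
  exact key_unit_bound _ m c M hc0 hc1 (hMb η) hAm
end
end
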